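/- arXiv:2504.12754 — 7 statements merged into one kernel-verified Lean document; each statement's English description precedes it below -/
import Mathlib

section
/- Let $\mathcal{H}$ be a finite-dimensional complex Hilbert space, $n \geq 2$ an integer, $P_1,\dots,P_n$ orthogonal projections on $\mathcal{H}$, and $\sigma$ a density operator on $\mathcal{H}$. Define $V = \frac{1}{n}\sum_{i=1}^n \mathrm{Tr}(P_i\sigma)$ and $E = \frac{1}{n(n-1)}\sum_{i\neq j} \mathrm{Tr}(P_j P_i \sigma P_i P_j)$. Then $E \geq \frac{n^2}{(n-1)^2} V (\max\{0, V - \tfrac{1}{n}\})^2$. -/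
open Matrix BigOperators ComplexOrder


open Matrix BigOperators ComplexOrder
open scoped MatrixOrder

variable {d : ℕ}

noncomputable def toE (M : Matrix (Fin d) (Fin d) ℂ) : EuclideanSpace ℂ (Fin d × Fin d) :=
  WithLp.toLp 2 fun p => M p.1 p.2

lemma inner_toE (X Y : Matrix (Fin d) (Fin d) ℂ) :
    (inner ℂ (toE X) (toE Y) : ℂ) = (Xᴴ * Y).trace := by
  simp only [PiLp.inner_apply, RCLike.inner_apply, toE, Matrix.trace, Matrix.diag,
    Matrix.mul_apply, Matrix.conjTranspose_apply]
  rw [Fintype.sum_prod_type]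
  rw [Finset.sum_comm]
  exact Finset.sum_congr rfl fun _ _ => Finset.sum_congr rfl fun _ _ => mul_comm _ _

lemma norm_toE_sq (X : Matrix (Fin d) (Fin d) ℂ) :
    ‖toE X‖ ^ 2 = ((Xᴴ * X).trace).re := by
  rw [← inner_self_eq_norm_sq (𝕜 := ℂ), inner_toE]
  rfl

lemma trace_sq_nonneg (X : Matrix (Fin d) (Fin d) ℂ) : 0 ≤ ((Xᴴ * X).trace).re := by
  rw [← norm_toE_sq]; positivity

lemma trace_cs (X Y : Matrix (Fin d) (Fin d) ℂ) :
    ‖(Xᴴ * Y).trace‖ ^ 2 ≤ ((Xᴴ * X).trace).re * ((Yᴴ * Y).trace).re := by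
  rw [← norm_toE_sq, ← norm_toE_sq, ← inner_toE]
  calc ‖(inner ℂ (toE X) (toE Y) : ℂ)‖ ^ 2 ≤ (‖toE X‖ * ‖toE Y‖) ^ 2 := by
        apply pow_le_pow_left₀ (by positivity)
        exact norm_inner_le_norm (𝕜 := ℂ) _ _
    _ = ‖toE X‖ ^ 2 * ‖toE Y‖ ^ 2 := by ring

section identities
variable {n : ℕ} (P : Fin n → Matrix (Fin d) (Fin d) ℂ)
  (σ R : Matrix (Fin d) (Fin d) ℂ)

lemma idA (hR : Rᴴ = R) (hRR : R * R = σ) (i : Fin n) (hi : (P i).IsHermitian)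
    (hi2 : P i * P i = P i) :
    ((P i * R)ᴴ * (P i * R)).trace = (P i * σ).trace := by
  rw [conjTranspose_mul, hR, hi.eq]
  calc ((R * P i) * (P i * R)).trace = ((P i * R) * (R * P i)).trace :=
        Matrix.trace_mul_comm _ _
    _ = (P i * σ * P i).trace := by rw [mul_assoc, ← mul_assoc R R, hRR, ← mul_assoc]
    _ = (P i * P i * σ).trace := by rw [Matrix.trace_mul_cycle]
    _ = (P i * σ).trace := by rw [hi2]

lemma idB (hR : Rᴴ = R) (hRR : R * R = σ) (i j : Fin n) (hj : (P j).IsHermitian)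
    (hj2 : P j * P j = P j) :
    ((P j * R)ᴴ * (P j * (P i * R))).trace = (P j * P i * σ).trace := by
  rw [conjTranspose_mul, hR, hj.eq]
  have e1 : (R * P j) * (P j * (P i * R)) = R * ((P j * P i) * R) := by
    rw [mul_assoc R (P j), ← mul_assoc (P j) (P j), hj2, ← mul_assoc (P j) (P i) R]
  rw [e1, Matrix.trace_mul_comm, mul_assoc, hRR]

lemma idC (hR : Rᴴ = R) (hRR : R * R = σ) (i j : Fin n) (hi : (P i).IsHermitian)
    (hj : (P j).IsHermitian) :
    ((P j * (P i * R))ᴴ * (P j * (P i * R))).trace = (P j * P i * σ * P i * P j).trace := by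
  rw [conjTranspose_mul, conjTranspose_mul, hR, hi.eq, hj.eq]
  calc (((R * P i) * P j) * (P j * (P i * R))).trace
      = ((P j * (P i * R)) * ((R * P i) * P j)).trace := Matrix.trace_mul_comm _ _
    _ = (P j * P i * σ * P i * P j).trace := by
        rw [← mul_assoc (P j) (P i) R, mul_assoc (P j * P i) R, mul_assoc R (P i) (P j),
          ← mul_assoc R R, hRR, ← mul_assoc (P j * P i) σ, ← mul_assoc]

lemma idQ (hR : Rᴴ = R) (hRR : R * R = σ) (A : Matrix (Fin d) (Fin d) ℂ) (hA : Aᴴ = A) :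
    (Rᴴ * (A * R)).trace = (A * σ).trace ∧
    ((A * R)ᴴ * (A * R)).trace = (A * A * σ).trace ∧
    (Rᴴ * R).trace = σ.trace := by
  refine ⟨?_, ?_, by rw [hR, hRR]⟩
  · rw [hR, ← mul_assoc, Matrix.trace_mul_comm, ← mul_assoc, hRR, Matrix.trace_mul_comm]
  · rw [conjTranspose_mul, hR, hA, mul_assoc R A, Matrix.trace_mul_comm, ← mul_assoc,
      mul_assoc (A * A) R R, hRR]


end identities

/-- Tight consecutive measurement theorem. -/
theorem tight_CMT {d n : ℕ} (hn : 2 ≤ n)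
    (P : Fin n → Matrix (Fin d) (Fin d) ℂ)
    (hP : ∀ i, (P i).IsHermitian ∧ P i * P i = P i)
    (σ : Matrix (Fin d) (Fin d) ℂ) (hσ : σ.PosSemidef) (hσtr : σ.trace = 1)
    (V E : ℝ)
    (hV : V = (1 / (n : ℝ)) * ∑ i, ((P i * σ).trace).re)
    (hE : E = (1 / ((n : ℝ) * ((n : ℝ) - 1))) * ∑ i, ∑ j,
        if i ≠ j then ((P j * P i * σ * P i * P j).trace).re else 0) :
    E ≥ ((n : ℝ) ^ 2 / ((n : ℝ) - 1) ^ 2) * V * (max 0 (V - 1 / (n : ℝ))) ^ 2 := by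
  have hn2 : (2 : ℝ) ≤ (n : ℝ) := by exact_mod_cast hn
  have hnpos : (0 : ℝ) < (n : ℝ) := by linarith
  have hn1 : (0 : ℝ) < (n : ℝ) - 1 := by linarith
  set R := CFC.sqrt σ with hRdef
  have hR : Rᴴ = R := (CFC.sqrt_nonneg σ).posSemidef.1
  have hRR : R * R = σ := CFC.sqrt_mul_sqrt_self σ hσ.nonneg
  set p : Fin n → ℝ := fun i => ((P i * σ).trace).re with hpdef
  set s : Fin n → Fin n → ℝ := fun i j => ((P j * P i * σ * P i * P j).trace).re with hsdef
  set h : Fin n → Fin n → ℝ := fun i j => ((P i * P j * σ).trace).re with hhdef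
  have hp0 : ∀ i, 0 ≤ p i := by
    intro i
    have := trace_sq_nonneg (P i * R)
    rwa [idA P σ R hR hRR i (hP i).1 (hP i).2] at this
  have hs0 : ∀ i j, 0 ≤ s i j := by
    intro i j
    have := trace_sq_nonneg (P j * (P i * R))
    rwa [idC P σ R hR hRR i j (hP i).1 (hP j).1] at this
  -- symmetry of g
  have hsym : ∀ i j : Fin n, ((P j * P i * σ).trace).re = h i j := by
    intro i j
    have e : (P i * P j * σ)ᴴ = σ * (P j * P i) := by
      rw [conjTranspose_mul, conjTranspose_mul, hσ.1.eq, (hP i).1.eq, (hP j).1.eq]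
    have : starRingEnd ℂ ((P i * P j * σ).trace) = (P j * P i * σ).trace := by
      rw [starRingEnd_apply, ← Matrix.trace_conjTranspose, e, Matrix.trace_mul_comm]
    rw [hhdef]
    dsimp only
    rw [← this, Complex.conj_re]
  -- key pointwise Cauchy-Schwarz
  have key : ∀ i j, h i j ^ 2 ≤ s i j * p j := by
    intro i j
    have h1 := trace_cs (P j * R) (P j * (P i * R))
    rw [idA P σ R hR hRR j (hP j).1 (hP j).2, idB P σ R hR hRR i j (hP j).1 (hP j).2,
      idC P σ R hR hRR i j (hP i).1 (hP j).1] at h1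
    have h2 : h i j ^ 2 ≤ ‖(P j * P i * σ).trace‖ ^ 2 := by
      rw [← hsym i j, ← sq_abs]
      exact pow_le_pow_left₀ (abs_nonneg _) (Complex.abs_re_le_norm _) 2
    calc h i j ^ 2 ≤ ‖(P j * P i * σ).trace‖ ^ 2 := h2
      _ ≤ p j * s i j := h1
      _ = s i j * p j := mul_comm _ _
  set A : Matrix (Fin d) (Fin d) ℂ := ∑ i, P i with hAdef
  have hAH : Aᴴ = A := by
    rw [hAdef, Matrix.conjTranspose_sum]
    exact Finset.sum_congr rfl fun i _ => (hP i).1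
  obtain ⟨e1, e2, e3⟩ := idQ σ R hR hRR A hAH
  set q := ∑ i, p i with hqdef
  have hVq : V = q / (n : ℝ) := by
    rw [hV, hqdef, hpdef]; ring
  have hqtr : (A * σ).trace = ∑ i, (P i * σ).trace := by
    rw [hAdef, Matrix.sum_mul, Matrix.trace_sum]
  have hqre : q = ((A * σ).trace).re := by
    rw [hqtr, Complex.re_sum, hqdef]
  have hq0 : 0 ≤ q := Finset.sum_nonneg fun i _ => hp0 i
  have ht : ((A * A * σ).trace).re = ∑ i, ∑ j, h i j := by
    have e : A * A * σ = ∑ i, ∑ j, P i * P j * σ := by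
      rw [hAdef, Matrix.sum_mul, Matrix.sum_mul]
      refine Finset.sum_congr rfl fun i _ => ?_
      rw [Matrix.mul_sum, Matrix.sum_mul]
    rw [e, Matrix.trace_sum, Complex.re_sum]
    refine Finset.sum_congr rfl fun i _ => ?_
    rw [Matrix.trace_sum, Complex.re_sum]
  set t := ∑ i, ∑ j, h i j with htdef
  have hq2t : q ^ 2 ≤ t := by
    have h1 := trace_cs R (A * R)
    rw [e1, e2, e3, hσtr] at h1
    simp only [Complex.one_re, one_mul] at h1
    calc q ^ 2 = (((A * σ).trace).re) ^ 2 := by rw [hqre]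
      _ ≤ ‖(A * σ).trace‖ ^ 2 := by
          rw [← sq_abs]
          exact pow_le_pow_left₀ (abs_nonneg _) (Complex.abs_re_le_norm _) 2
      _ ≤ ((A * A * σ).trace).re := h1
      _ = t := ht
  -- diagonal
  have hdiag : ∀ j, h j j = p j := by
    intro j
    rw [hhdef, hpdef]
    dsimp only
    rw [(hP j).2]
  -- column sums
  set c : Fin n → ℝ := fun j => ∑ i ∈ Finset.univ.erase j, h i j with hcdef
  set S : Fin n → ℝ := fun j => ∑ i ∈ Finset.univ.erase j, s i j with hSdef
  have hS0 : ∀ j, 0 ≤ S j := fun j => Finset.sum_nonneg fun i _ => hs0 i j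
  have hsumc : ∑ j, c j = t - q := by
    have e : ∀ j, c j = (∑ i, h i j) - p j := by
      intro j
      rw [hcdef]
      dsimp only
      rw [← hdiag j, ← Finset.sum_erase_add Finset.univ _ (Finset.mem_univ j)]
      ring
    rw [Finset.sum_congr rfl fun j _ => e j, Finset.sum_sub_distrib, ← hqdef,
      Finset.sum_comm, ← htdef]
  have hcard : ∀ j : Fin n, ((Finset.univ.erase j).card : ℝ) = (n : ℝ) - 1 := by
    intro j
    rw [Finset.card_erase_of_mem (Finset.mem_univ j), Finset.card_univ, Fintype.card_fin]
    have h1 : 1 ≤ n := le_trans one_le_two hn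
    push_cast [Nat.cast_sub h1]
    ring
  -- per-column Cauchy-Schwarz
  have step3 : ∀ j, c j ^ 2 ≤ ((n : ℝ) - 1) * S j * p j := by
    intro j
    calc c j ^ 2 ≤ ((Finset.univ.erase j).card : ℝ) * ∑ i ∈ Finset.univ.erase j, h i j ^ 2 :=
          sq_sum_le_card_mul_sum_sq
      _ = ((n : ℝ) - 1) * ∑ i ∈ Finset.univ.erase j, h i j ^ 2 := by rw [hcard j]
      _ ≤ ((n : ℝ) - 1) * ∑ i ∈ Finset.univ.erase j, s i j * p j := by
          apply mul_le_mul_of_nonneg_left _ (by linarith)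
          exact Finset.sum_le_sum fun i _ => key i j
      _ = ((n : ℝ) - 1) * S j * p j := by
          rw [← Finset.sum_mul, hSdef, mul_assoc]
  have hc_le : ∀ j, c j ≤ Real.sqrt (p j) * Real.sqrt (((n : ℝ) - 1) * S j) := by
    intro j
    have h1 : c j ≤ Real.sqrt (c j ^ 2) := by
      rw [Real.sqrt_sq_eq_abs]; exact le_abs_self _
    have h2 : Real.sqrt (c j ^ 2) ≤ Real.sqrt (p j * (((n : ℝ) - 1) * S j)) := by
      apply Real.sqrt_le_sqrt
      calc c j ^ 2 ≤ ((n : ℝ) - 1) * S j * p j := step3 j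
        _ = p j * (((n : ℝ) - 1) * S j) := by ring
    calc c j ≤ Real.sqrt (p j * (((n : ℝ) - 1) * S j)) := le_trans h1 h2
      _ = Real.sqrt (p j) * Real.sqrt (((n : ℝ) - 1) * S j) :=
          Real.sqrt_mul (hp0 j) _
  set Stot := ∑ j, S j with hStotdef
  have hStot0 : 0 ≤ Stot := Finset.sum_nonneg fun j _ => hS0 j
  -- E in terms of Stot
  have hEcol : ∀ j : Fin n, (∑ i, if i ≠ j then s i j else 0) = S j := by
    intro j
    rw [← Finset.sum_filter, Finset.filter_ne']
  have hEStot : E = (1 / ((n : ℝ) * ((n : ℝ) - 1))) * Stot := by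
    rw [hE, hStotdef]
    congr 1
    rw [Finset.sum_comm]
    exact Finset.sum_congr rfl fun j _ => hEcol j
  have hne : (n : ℝ) ≠ 0 := ne_of_gt hnpos
  have hne1 : (n : ℝ) - 1 ≠ 0 := ne_of_gt hn1
  rcases le_total q 1 with hq1 | hq1
  · -- small q case : RHS is zero
    have hmax : max 0 (V - 1 / (n : ℝ)) = 0 := by
      apply max_eq_left
      rw [hVq, ← sub_div]
      exact div_nonpos_of_nonpos_of_nonneg (by linarith) hnpos.le
    rw [hmax]
    have hE0 : 0 ≤ E := by
      rw [hEStot]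
      apply mul_nonneg _ hStot0
      apply le_of_lt
      exact div_pos one_pos (mul_pos hnpos hn1)
    calc ((n : ℝ) ^ 2 / ((n : ℝ) - 1) ^ 2) * V * (0 : ℝ) ^ 2 = 0 := by ring
      _ ≤ E := hE0
  · -- main case : q ≥ 1
    have htq : q ^ 2 - q ≤ t - q := by linarith only [hq2t]
    have htq0 : 0 ≤ q ^ 2 - q := by
      have e : q ^ 2 - q = q * (q - 1) := by ring
      rw [e]
      exact mul_nonneg (by linarith only [hq1]) (by linarith only [hq1])
    have hq0' : 0 < q := by linarith
    have hsum_le : t - q ≤ ∑ j, Real.sqrt (p j) * Real.sqrt (((n : ℝ) - 1) * S j) := by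
      rw [← hsumc]
      exact Finset.sum_le_sum fun j _ => hc_le j
    have hcs : (∑ j, Real.sqrt (p j) * Real.sqrt (((n : ℝ) - 1) * S j)) ^ 2 ≤
        q * (((n : ℝ) - 1) * Stot) := by
      calc (∑ j, Real.sqrt (p j) * Real.sqrt (((n : ℝ) - 1) * S j)) ^ 2
          ≤ (∑ j, Real.sqrt (p j) ^ 2) * ∑ j, Real.sqrt (((n : ℝ) - 1) * S j) ^ 2 :=
            Finset.sum_mul_sq_le_sq_mul_sq _ _ _
        _ = q * (((n : ℝ) - 1) * Stot) := by
            have A1 : ∑ j, Real.sqrt (p j) ^ 2 = q :=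
              Finset.sum_congr rfl fun j _ => Real.sq_sqrt (hp0 j)
            have A2 : ∑ j, Real.sqrt (((n : ℝ) - 1) * S j) ^ 2 = ((n : ℝ) - 1) * Stot := by
              rw [hStotdef, Finset.mul_sum]
              exact Finset.sum_congr rfl fun j _ =>
                Real.sq_sqrt (mul_nonneg (by linarith) (hS0 j))
            rw [A1, A2]
    have hfinal : (q ^ 2 - q) ^ 2 ≤ q * (((n : ℝ) - 1) * Stot) := by
      have h1 : (q ^ 2 - q) ^ 2 ≤ (t - q) ^ 2 := pow_le_pow_left₀ htq0 htq 2
      have h2 : (t - q) ^ 2 ≤ (∑ j, Real.sqrt (p j) * Real.sqrt (((n : ℝ) - 1) * S j)) ^ 2 :=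
        pow_le_pow_left₀ (le_trans htq0 htq) hsum_le 2
      linarith only [h1, h2, hcs]
    have hkey : q * (q - 1) ^ 2 ≤ ((n : ℝ) - 1) * Stot := by
      have e : (q ^ 2 - q) ^ 2 = q * (q * (q - 1) ^ 2) := by ring
      rw [e] at hfinal
      exact le_of_mul_le_mul_left hfinal hq0'
    have hmax : max 0 (V - 1 / (n : ℝ)) = V - 1 / (n : ℝ) := by
      apply max_eq_right
      rw [hVq, ← sub_div]
      exact div_nonneg (by linarith) hnpos.le
    rw [hmax, hEStot, hVq, ge_iff_le]
    calc ((n : ℝ) ^ 2 / ((n : ℝ) - 1) ^ 2) * (q / (n : ℝ)) * (q / (n : ℝ) - 1 / (n : ℝ)) ^ 2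
        = (q * (q - 1) ^ 2) * (1 / ((n : ℝ) * ((n : ℝ) - 1) ^ 2)) := by
          field_simp
      _ ≤ (((n : ℝ) - 1) * Stot) * (1 / ((n : ℝ) * ((n : ℝ) - 1) ^ 2)) := by
          apply mul_le_mul_of_nonneg_right hkey
          exact le_of_lt (div_pos one_pos (mul_pos hnpos (pow_pos hn1 2)))
      _ = 1 / ((n : ℝ) * ((n : ℝ) - 1)) * Stot := by
          field_simp
end

section
/- For every integer $n \geq 2$ and every real $v \in [0,1]$, there exist a finite-dimensional Hilbert space $\mathcal{H}$, a density operator $\sigma$, and orthogonal projections $P_1,\dots,P_n$ on $\mathcal{H}$ such that $\frac{1}{n}\sum_i \mathrm{Tr}(P_i\sigma) = v$ and $\frac{1}{n(n-1)}\sum_{i\neq j}\mathrm{Tr}(P_j P_i \sigma P_i P_j) = \frac{n^2}{(n-1)^2} v (\max\{0, v - \tfrac{1}{n}\})^2$. -/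
open Matrix BigOperators ComplexOrder


noncomputable def rk {d : ℕ} (a b : Fin d → ℝ) : Matrix (Fin d) (Fin d) ℂ :=
  fun i j => ((a i * b j : ℝ) : ℂ)

lemma rk_mul {d : ℕ} (a b c e : Fin d → ℝ) :
    rk a b * rk c e = (((∑ k, b k * c k : ℝ)) : ℂ) • rk a e := by
  ext i j
  simp only [rk, Matrix.mul_apply, Matrix.smul_apply, smul_eq_mul]
  push_cast
  rw [Finset.sum_mul]
  exact Finset.sum_congr rfl fun k _ => by ring

lemma rk_trace {d : ℕ} (a b : Fin d → ℝ) :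
    (rk a b).trace = ((∑ k, a k * b k : ℝ) : ℂ) := by
  simp [Matrix.trace, Matrix.diag, rk]

lemma rk_isHermitian {d : ℕ} (a : Fin d → ℝ) : (rk a a).IsHermitian := by
  ext i j
  simp [rk, Matrix.conjTranspose_apply, mul_comm, ← Complex.ofReal_mul]

lemma rk_posSemidef {d : ℕ} (a : Fin d → ℝ) : (rk a a).PosSemidef := by
  refine Matrix.PosSemidef.of_dotProduct_mulVec_nonneg (rk_isHermitian a) fun x => ?_
  have h : dotProduct (star x) (rk a a *ᵥ x)
      = star (∑ k, (a k : ℂ) * x k) * (∑ k, (a k : ℂ) * x k) := by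
    simp only [dotProduct, Matrix.mulVec, rk, Pi.star_apply, star_sum, star_mul',
      Complex.star_def, Complex.conj_ofReal, Finset.sum_mul, Finset.mul_sum]
    rw [Finset.sum_comm]
    refine Finset.sum_congr rfl fun i _ => Finset.sum_congr rfl fun k _ => ?_
    push_cast
    ring
  rw [h]
  exact star_mul_self_nonneg _

/-- Tightness of the tight consecutive measurement theorem. -/
theorem tight_CMT_tightness (n : ℕ) (hn : 2 ≤ n) (v : ℝ) (hv : v ∈ Set.Icc (0 : ℝ) 1) :
    ∃ (d : ℕ) (σ : Matrix (Fin d) (Fin d) ℂ) (P : Fin n → Matrix (Fin d) (Fin d) ℂ),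
      σ.PosSemidef ∧ σ.trace = 1 ∧
      (∀ i, (P i).IsHermitian ∧ P i * P i = P i) ∧
      (1 / (n : ℝ)) * ∑ i, ((P i * σ).trace).re = v ∧
      (1 / ((n : ℝ) * ((n : ℝ) - 1))) * ∑ i, ∑ j,
          (if i ≠ j then ((P j * P i * σ * P i * P j).trace).re else 0)
        = ((n : ℝ) ^ 2 / ((n : ℝ) - 1) ^ 2) * v * (max 0 (v - 1 / (n : ℝ))) ^ 2 := by
  rcases le_total v (1 / (n:ℕ)) with hcase | hcase
  ·
    obtain ⟨hv0, hv1⟩ := hv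
    have hnpos : (0:ℝ) < n := by positivity
    have hn0 : (n:ℝ) ≠ 0 := ne_of_gt hnpos
    have hnv : (n:ℝ) * v ≤ 1 := by
      rw [le_div_iff₀ hnpos] at hcase
      linarith
    -- e i : standard basis vector
    set e : Fin n → Fin (n+1) → ℝ := fun i k => if k = i.castSucc then 1 else 0 with he
    set c : Fin (n+1) → ℝ := fun k => if (k : ℕ) < n then v else 1 - n * v with hc
    refine ⟨n+1, Matrix.diagonal (fun k => ((c k : ℝ) : ℂ)), fun i => rk (e i) (e i), ?_, ?_, ?_, ?_, ?_⟩
    · refine Matrix.posSemidef_diagonal_iff.mpr fun k => ?_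
      rw [Complex.zero_le_real]
      by_cases h : (k:ℕ) < n <;> simp [hc, h] <;> linarith
    · rw [Matrix.trace_diagonal, ← Complex.ofReal_sum]
      norm_cast
      rw [Fin.sum_univ_castSucc]
      have h1 : ∀ i : Fin n, c i.castSucc = v := fun i => if_pos i.isLt
      have h2 : c (Fin.last n) = 1 - n * v := if_neg (by simp)
      rw [Finset.sum_congr rfl fun i _ => h1 i, h2, Finset.sum_const, Finset.card_univ]
      simp
    · intro i
      refine ⟨rk_isHermitian _, ?_⟩
      rw [rk_mul]
      have : ∑ k, e i k * e i k = 1 := by simp [he]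
      rw [this]
      simp
    · have key : ∀ i, ((rk (e i) (e i) * Matrix.diagonal (fun k => ((c k : ℝ) : ℂ))).trace) = (v:ℂ) := by
        intro i
        rw [Matrix.trace]
        simp only [Matrix.diag, Matrix.mul_diagonal, rk, he]
        rw [Finset.sum_eq_single i.castSucc]
        · simp [hc, i.isLt]
        · intro k _ hk; simp [hk]
        · simp
      rw [Finset.sum_congr rfl fun i _ => by rw [key i]]
      simp
      field_simp
    · have hzero : ∀ i j : Fin n, i ≠ j → rk (e j) (e j) * rk (e i) (e i) = 0 := by
        intro i j hij
        rw [rk_mul]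
        have : ∑ k, e j k * e i k = 0 := by
          apply Finset.sum_eq_zero
          intro k _
          by_cases h : k = j.castSucc
          · have : k ≠ i.castSucc := by
              rw [h]; simp [Fin.castSucc_inj]; exact fun hh => hij (hh.symm)
            simp [he, h, this]
            exact fun hh => hij hh.symm
          · simp [he, h]
        rw [this]; simp
      have hL : ∀ i j : Fin n, (if i ≠ j then ((rk (e j) (e j) * rk (e i) (e i) * Matrix.diagonal (fun k => ((c k : ℝ) : ℂ)) * rk (e i) (e i) * rk (e j) (e j)).trace).re else 0) = 0 := by
        intro i j
        by_cases h : i ≠ j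
        · rw [if_pos h, hzero i j h]; simp
        · rw [if_neg h]
      rw [Finset.sum_congr rfl fun i _ => Finset.sum_congr rfl fun j _ => hL i j]
      have : max 0 (v - 1 / n) = 0 := max_eq_left (by linarith [hcase])
      rw [this]
      simp
  ·
    obtain ⟨hv0, hv1⟩ := hv
    have hnpos : (0:ℝ) < n := by positivity
    have hn0 : (n:ℝ) ≠ 0 := ne_of_gt hnpos
    have hn2 : (2:ℝ) ≤ (n:ℝ) := by exact_mod_cast hn
    have hn1pos : (0:ℝ) < (n:ℝ) - 1 := by linarith
    have hn1 : ((n:ℝ) - 1) ≠ 0 := ne_of_gt hn1pos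
    have h1nv : (1:ℝ) ≤ (n:ℝ) * v := by
      rw [div_le_iff₀ hnpos] at hcase; linarith
    obtain ⟨ε, hεnv, hε0, hε1⟩ :
        ∃ ε, ((n:ℝ)-1)*ε = (n:ℝ)*v - 1 ∧ 0 ≤ ε ∧ ε ≤ 1 := by
      refine ⟨((n:ℝ)*v - 1)/((n:ℝ)-1), by field_simp,
        div_nonneg (by linarith) (le_of_lt hn1pos), ?_⟩
      rw [div_le_one hn1pos]; nlinarith
    obtain ⟨α, hα⟩ : ∃ α : ℝ, α^2 = 1 - ε :=
      ⟨Real.sqrt (1-ε), Real.sq_sqrt (by linarith)⟩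
    obtain ⟨β, hs2⟩ : ∃ β : ℝ, (α + (n:ℝ)*β)^2 = (n:ℝ)*v := by
      refine ⟨(Real.sqrt ((n:ℝ)*v) - α)/n, ?_⟩
      have h : α + (n:ℝ)*((Real.sqrt ((n:ℝ)*v) - α)/n) = Real.sqrt ((n:ℝ)*v) := by field_simp; ring
      rw [h]; exact Real.sq_sqrt (by linarith)
    obtain ⟨c, hc2⟩ : ∃ c : ℝ, c*c = 1/(n:ℝ) :=
      ⟨Real.sqrt (1/(n:ℝ)), Real.mul_self_sqrt (by positivity)⟩
    have key2 : (n:ℝ)*(β*β) + 2*(α*β) = ε := by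
      have key2n : (n:ℝ) * ((n:ℝ)*(β*β) + 2*(α*β)) = (n:ℝ)*ε := by
        linear_combination hs2 - hα - hεnv
      exact mul_left_cancel₀ hn0 key2n
    have key1 : (n:ℝ)*(β*β) + (2*(α*β) + α*α) = 1 := by nlinarith [key2, hα]
    set s : ℝ := (α + (n:ℝ)*β) * c with hsdef
    have hsv : s * s = v := by
      have h : s * s = (α + (n:ℝ)*β)^2 * (c * c) := by rw [hsdef]; ring
      rw [h, hs2, hc2]; field_simp
    set w : Fin n → ℝ := fun _ => c with hwdef
    set φ : Fin n → Fin n → ℝ := fun i k => β + if k = i then α else 0 with hφdef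
    -- dot products
    have hdots : ∀ i, ∑ k, φ i k * φ i k = 1 := by
      intro i
      have h : ∀ k, φ i k * φ i k = β*β + (if k = i then 2*(α*β) + α*α else 0) := by
        intro k
        by_cases h : k = i <;> simp only [hφdef, if_pos, if_neg, h, if_true, if_false] <;> ring
      rw [Finset.sum_congr rfl fun k _ => h k, Finset.sum_add_distrib, Finset.sum_const,
        Finset.card_univ, Finset.sum_ite_eq' Finset.univ i]
      simpa [nsmul_eq_mul] using key1
    have hdoto : ∀ i j : Fin n, i ≠ j → ∑ k, φ i k * φ j k = ε := by
      intro i j hij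
      have h : ∀ k, φ i k * φ j k
          = β*β + ((if k = i then α*β else 0) + (if k = j then α*β else 0)) := by
        intro k
        by_cases h1 : k = i <;> by_cases h2 : k = j
        · exact absurd (h1.symm.trans h2) hij
        all_goals simp [hφdef, h1, h2, hij, Ne.symm hij] <;> ring
      rw [Finset.sum_congr rfl fun k _ => h k, Finset.sum_add_distrib, Finset.sum_add_distrib,
        Finset.sum_const, Finset.card_univ, Finset.sum_ite_eq' Finset.univ i,
        Finset.sum_ite_eq' Finset.univ j]
      simpa [nsmul_eq_mul] using (by linarith [key2] : (n:ℝ)*(β*β) + (α*β + α*β) = ε)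
    have hdotw : ∀ i, ∑ k, φ i k * w k = s := by
      intro i
      have hk : ∀ k, φ i k * w k = β*c + (if k = i then α*c else 0) := by
        intro k
        by_cases h : k = i <;> simp only [hφdef, hwdef, h, if_true, if_false] <;> ring
      rw [Finset.sum_congr rfl fun k _ => hk k, Finset.sum_add_distrib, Finset.sum_const,
        Finset.card_univ, Finset.sum_ite_eq' Finset.univ i]
      simp only [Fintype.card_fin, nsmul_eq_mul, Finset.mem_univ, if_true, hsdef]
      ring
    have hdotw' : ∀ i, ∑ k, w k * φ i k = s := by
      intro i; rw [← hdotw i]; exact Finset.sum_congr rfl fun k _ => mul_comm _ _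
    have hww : ∑ k : Fin n, w k * w k = 1 := by
      simp only [hwdef]
      rw [Finset.sum_const, Finset.card_univ, Fintype.card_fin, nsmul_eq_mul, hc2]
      field_simp
    refine ⟨n, rk w w, fun i => rk (φ i) (φ i), rk_posSemidef w, ?_, ?_, ?_, ?_⟩
    · rw [rk_trace, hww]; norm_num
    · intro i
      refine ⟨rk_isHermitian _, ?_⟩
      rw [rk_mul, hdots i]
      simp
    · have key : ∀ i, ((rk (φ i) (φ i) * rk w w).trace).re = v := by
        intro i
        rw [rk_mul, Matrix.trace_smul, rk_trace, hdotw i, smul_eq_mul,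
          ← Complex.ofReal_mul, Complex.ofReal_re, hsv]
      rw [Finset.sum_congr rfl fun i _ => key i, Finset.sum_const, Finset.card_univ]
      simp only [Fintype.card_fin, nsmul_eq_mul]
      field_simp
    · have key : ∀ i j : Fin n, i ≠ j →
          ((rk (φ j) (φ j) * rk (φ i) (φ i) * rk w w * rk (φ i) (φ i) * rk (φ j) (φ j)).trace).re
            = ε * ε * v := by
        intro i j hij
        have e1 : rk (φ j) (φ j) * rk (φ i) (φ i) = ((ε:ℝ):ℂ) • rk (φ j) (φ i) := by
          rw [rk_mul, hdoto j i hij.symm]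
        have e2 : rk (φ j) (φ i) * rk w w = ((s:ℝ):ℂ) • rk (φ j) w := by
          rw [rk_mul, hdotw i]
        have e3 : rk (φ j) w * rk (φ i) (φ i) = ((s:ℝ):ℂ) • rk (φ j) (φ i) := by
          rw [rk_mul, hdotw' i]
        have e4 : rk (φ j) (φ i) * rk (φ j) (φ j) = ((ε:ℝ):ℂ) • rk (φ j) (φ j) := by
          rw [rk_mul, hdoto i j hij]
        rw [e1]
        simp only [smul_mul_assoc]
        rw [e2]
        simp only [smul_mul_assoc]
        rw [e3]
        simp only [smul_mul_assoc]
        rw [e4]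
        simp only [smul_smul, Matrix.trace_smul, rk_trace, hdots j, smul_eq_mul,
          ← Complex.ofReal_mul, Complex.ofReal_one, mul_one, Complex.ofReal_re]
        nlinarith [hsv]
      have hrow : ∀ i : Fin n, (∑ j, if i ≠ j then
          ((rk (φ j) (φ j) * rk (φ i) (φ i) * rk w w * rk (φ i) (φ i) * rk (φ j) (φ j)).trace).re
          else 0) = ((n:ℝ)-1) * (ε*ε*v) := by
        intro i
        have h : ∀ j, (if i ≠ j then
            ((rk (φ j) (φ j) * rk (φ i) (φ i) * rk w w * rk (φ i) (φ i) * rk (φ j) (φ j)).trace).re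
            else 0) = ε*ε*v - (if i = j then ε*ε*v else 0) := by
          intro j
          by_cases h : i = j
          · simp [h]
          · rw [if_pos h, key i j h, if_neg h]; ring
        rw [Finset.sum_congr rfl fun j _ => h j, Finset.sum_sub_distrib, Finset.sum_const,
          Finset.card_univ, Finset.sum_ite_eq]
        simp only [Fintype.card_fin, nsmul_eq_mul, Finset.mem_univ, if_true]
        ring
      rw [Finset.sum_congr rfl fun i _ => hrow i, Finset.sum_const, Finset.card_univ]
      have hmax : max 0 (v - 1/(n:ℝ)) = v - 1/(n:ℝ) := by
        refine max_eq_right ?_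
        rw [sub_nonneg]; exact hcase
      rw [hmax]
      have hεeq : ε = ((n:ℝ)*v - 1)/((n:ℝ)-1) := by
        rw [eq_div_iff hn1]; linarith [hεnv]
      rw [hεeq]
      simp only [Fintype.card_fin, nsmul_eq_mul]
      field_simp
end

section
/- Let $|\phi\rangle, |\phi_1\rangle, \dots, |\phi_n\rangle$ be unit vectors in a finite-dimensional Hilbert space, and let $V = \frac{1}{n}\sum_{i=1}^n |\langle\phi|\phi_i\rangle|^2$. Then $\frac{1}{n(n-1)}\sum_{i \neq j} |\langle\phi|\phi_i\rangle|^2 |\langle\phi_i|\phi_j\rangle|^2 \geq \frac{n^2}{(n-1)^2} V (\max\{0, V - \tfrac{1}{n}\})^2$. -/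
open Matrix BigOperators



lemma cmt_aux {n : ℕ} (hn : 2 ≤ n) (s : Fin n → ℝ) (t : Fin n → Fin n → ℝ)
    (hs : ∀ i, 0 ≤ s i) (ht : ∀ i j, 0 ≤ t i j) (htii : ∀ i, t i i = 1)
    (key : (∑ i, s i ^ 2) ^ 2 ≤ ∑ i, ∑ j, s i * t i j * s j)
    (V : ℝ) (hV : V = (1 / (n : ℝ)) * ∑ i, s i ^ 2) :
    (1 / ((n : ℝ) * ((n : ℝ) - 1))) * ∑ i, ∑ j,
        (if i ≠ j then s i ^ 2 * t i j ^ 2 else 0)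
      ≥ ((n : ℝ) ^ 2 / ((n : ℝ) - 1) ^ 2) * V * (max 0 (V - 1 / (n : ℝ))) ^ 2 := by
  have hn2 : (2:ℝ) ≤ (n:ℝ) := by exact_mod_cast hn
  have hn1 : (0:ℝ) < (n:ℝ) - 1 := by linarith
  have hnpos : (0:ℝ) < (n:ℝ) := by linarith
  set A : ℝ := ∑ i, s i ^ 2 with hA
  have hAnn : 0 ≤ A := Finset.sum_nonneg fun i _ => sq_nonneg _
  set S : ℝ := ∑ i, ∑ j, (if i ≠ j then s i ^ 2 * t i j ^ 2 else 0) with hS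
  set C : ℝ := ∑ i, ∑ j, (if i ≠ j then s i * t i j * s j else 0) with hC
  have hSnn : 0 ≤ S := by
    apply Finset.sum_nonneg; intro i _; apply Finset.sum_nonneg; intro j _
    split
    · positivity
    · exact le_rfl
  have hCnn : 0 ≤ C := by
    apply Finset.sum_nonneg; intro i _; apply Finset.sum_nonneg; intro j _
    split
    · exact mul_nonneg (mul_nonneg (hs i) (ht i j)) (hs j)
    · exact le_rfl
  -- split the full double sum
  have hsplit : ∑ i, ∑ j, s i * t i j * s j = C + A := by
    rw [hC, hA, ← Finset.sum_add_distrib]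
    apply Finset.sum_congr rfl
    intro i _
    have h1 : ∀ j, s i * t i j * s j
        = (if i ≠ j then s i * t i j * s j else 0) + (if i = j then s i * t i j * s j else 0) := by
      intro j; by_cases h : i = j <;> simp [h]
    rw [Finset.sum_congr rfl (fun j _ => h1 j), Finset.sum_add_distrib]
    congr 1
    rw [Finset.sum_ite_eq]
    simp [htii i]
    ring
  have hAC : A ^ 2 - A ≤ C := by
    have := key
    rw [hsplit] at this
    linarith
  -- Cauchy-Schwarz on off-diagonal pairs
  set P : Finset (Fin n × Fin n) :=
    (Finset.univ ×ˢ Finset.univ).filter (fun x => x.1 ≠ x.2) with hP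
  have hCP : C = ∑ x ∈ P, (s x.1 * t x.1 x.2) * s x.2 := by
    rw [hP, Finset.sum_filter, Finset.sum_product]
  have hSP : S = ∑ x ∈ P, (s x.1 * t x.1 x.2) ^ 2 := by
    rw [hP, Finset.sum_filter, Finset.sum_product]
    apply Finset.sum_congr rfl; intro i _
    apply Finset.sum_congr rfl; intro j _
    split <;> ring
  have hBP : ∑ x ∈ P, (s x.2) ^ 2 = ((n:ℝ) - 1) * A := by
    rw [hP, Finset.sum_filter, Finset.sum_product]
    have inner : ∀ i, ∑ j, (if i ≠ j then s j ^ 2 else 0) = A - s i ^ 2 := by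
      intro i
      have h1 : ∀ j, (if i ≠ j then s j ^ 2 else 0)
          = s j ^ 2 - (if i = j then s j ^ 2 else 0) := by
        intro j; by_cases h : i = j <;> simp [h]
      rw [Finset.sum_congr rfl (fun j _ => h1 j), Finset.sum_sub_distrib, Finset.sum_ite_eq]
      simp [hA]
    rw [Finset.sum_congr rfl (fun i _ => inner i), Finset.sum_sub_distrib,
      Finset.sum_const, Finset.card_univ, Fintype.card_fin, nsmul_eq_mul, ← hA]
    ring
  have hCS : C ^ 2 ≤ S * (((n:ℝ) - 1) * A) := by
    rw [hCP, hSP, ← hBP]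
    exact Finset.sum_mul_sq_le_sq_mul_sq P _ _
  -- case split on V
  rcases le_or_gt V (1 / (n:ℝ)) with hVle | hVgt
  · have hmax : max 0 (V - 1 / (n:ℝ)) = 0 := max_eq_left (by linarith)
    rw [hmax]
    have : ((n:ℝ) ^ 2 / ((n:ℝ) - 1) ^ 2) * V * 0 ^ 2 = 0 := by ring
    rw [this]
    have h0 : (0:ℝ) < (n:ℝ) * ((n:ℝ) - 1) := by positivity
    positivity
  · have hmax : max 0 (V - 1 / (n:ℝ)) = V - 1 / (n:ℝ) := max_eq_right (by linarith)
    rw [hmax]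
    have hAV : A = (n:ℝ) * V := by
      rw [hV]; field_simp
    have hA1 : 1 < A := by
      rw [hAV]
      calc (1:ℝ) = (n:ℝ) * (1 / (n:ℝ)) := by field_simp
      _ < (n:ℝ) * V := by exact mul_lt_mul_of_pos_left hVgt hnpos
    have hApos : 0 < A := by linarith
    have h1 : A * (A - 1) ≤ C := by
      calc A * (A - 1) = A ^ 2 - A := by ring
      _ ≤ C := hAC
    have h1' : 0 ≤ A * (A - 1) := mul_nonneg hApos.le (by linarith)
    have hkey2 : (A * (A - 1)) ^ 2 ≤ S * (((n:ℝ) - 1) * A) :=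
      le_trans (pow_le_pow_left₀ h1' h1 2) hCS
    have h2 : A * (A - 1) ^ 2 / ((n:ℝ) - 1) ≤ S := by
      rw [div_le_iff₀ hn1]
      have h2' : (A * (A - 1) ^ 2) * A ≤ (S * ((n:ℝ) - 1)) * A := by
        calc (A * (A - 1) ^ 2) * A = (A * (A - 1)) ^ 2 := by ring
        _ ≤ S * (((n:ℝ) - 1) * A) := hkey2
        _ = (S * ((n:ℝ) - 1)) * A := by ring
      exact le_of_mul_le_mul_right h2' hApos
    have hid : ((n:ℝ) ^ 2 / ((n:ℝ) - 1) ^ 2) * V * (V - 1 / (n:ℝ)) ^ 2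
        = (1 / ((n:ℝ) * ((n:ℝ) - 1))) * (((n:ℝ) * V) * (((n:ℝ) * V) - 1) ^ 2 / ((n:ℝ) - 1)) := by
      field_simp
    rw [ge_iff_le, hid, ← hAV]
    exact mul_le_mul_of_nonneg_left h2 (by positivity)


local notation "⟪" x ", " y "⟫" => @inner ℂ _ _ x y

theorem test_key {d n : ℕ}
    (φ : Fin d → ℂ) (φs : Fin n → Fin d → ℂ)
    (hφ : star φ ⬝ᵥ φ = 1) (hφs : ∀ i, star (φs i) ⬝ᵥ φs i = 1) :
    (∑ i, ‖star φ ⬝ᵥ φs i‖ ^ 2) ^ 2 ≤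
      ∑ i, ∑ j, ‖star φ ⬝ᵥ φs i‖ * ‖star (φs i) ⬝ᵥ φs j‖ * ‖star φ ⬝ᵥ φs j‖ := by
  set x : EuclideanSpace ℂ (Fin d) := (WithLp.equiv 2 (Fin d → ℂ)).symm φ with hx
  set y : Fin n → EuclideanSpace ℂ (Fin d) :=
    fun i => (WithLp.equiv 2 (Fin d → ℂ)).symm (φs i) with hy
  have hxy : ∀ i, ⟪x, y i⟫ = star φ ⬝ᵥ φs i := fun i =>
    (EuclideanSpace.inner_toLp_toLp φ (φs i)).trans (dotProduct_comm _ _)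
  have hyy : ∀ i j, ⟪y i, y j⟫ = star (φs i) ⬝ᵥ φs j := fun i j =>
    (EuclideanSpace.inner_toLp_toLp (φs i) (φs j)).trans (dotProduct_comm _ _)
  have hxx : ⟪x, x⟫ = 1 := by exact ((EuclideanSpace.inner_toLp_toLp φ φ).trans (dotProduct_comm _ _)).trans hφ
  have hnx : ‖x‖ = 1 := by
    rw [@norm_eq_sqrt_re_inner ℂ, hxx]
    simp
  set W : EuclideanSpace ℂ (Fin d) :=
    ∑ i, (starRingEnd ℂ) (⟪x, y i⟫) • y i with hW
  have h1 : ⟪x, W⟫ = ((∑ i, ‖star φ ⬝ᵥ φs i‖ ^ 2 : ℝ) : ℂ) := by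
    rw [hW, inner_sum]
    push_cast
    apply Finset.sum_congr rfl
    intro i _
    rw [inner_smul_right, ← hxy i]
    rw [mul_comm, Complex.mul_conj']
  have h2 : ⟪W, W⟫ = ∑ i, ∑ j,
      ⟪x, y i⟫ * (starRingEnd ℂ) (⟪x, y j⟫) * ⟪y i, y j⟫ := by
    rw [hW, sum_inner]
    apply Finset.sum_congr rfl
    intro i _
    rw [inner_sum]
    apply Finset.sum_congr rfl
    intro j _
    rw [inner_smul_left, inner_smul_right]
    simp only [RingHomCompTriple.comp_apply, RingHom.id_apply, starRingEnd_self_apply]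
    ring
  set A : ℝ := ∑ i, ‖star φ ⬝ᵥ φs i‖ ^ 2 with hA
  have hAnn : (0:ℝ) ≤ A := Finset.sum_nonneg fun i _ => sq_nonneg _
  have hAW : A ≤ ‖W‖ := by
    have hcs : ‖⟪x, W⟫‖ ≤ ‖x‖ * ‖W‖ := norm_inner_le_norm x W
    rw [h1, hnx, one_mul] at hcs
    rwa [Complex.norm_real, Real.norm_of_nonneg hAnn] at hcs
  have hWW : (‖W‖:ℝ) ^ 2 ≤ ‖(⟪W, W⟫ : ℂ)‖ := by
    have := @inner_self_eq_norm_sq_to_K ℂ _ _ _ _ W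
    rw [this]
    push_cast
    rw [norm_pow]
    simp [RCLike.norm_ofReal, abs_of_nonneg (norm_nonneg W)]
  have h3 : ‖(⟪W, W⟫ : ℂ)‖ ≤ ∑ i, ∑ j,
      ‖star φ ⬝ᵥ φs i‖ * ‖star (φs i) ⬝ᵥ φs j‖ * ‖star φ ⬝ᵥ φs j‖ := by
    rw [h2]
    refine le_trans (norm_sum_le _ _) (Finset.sum_le_sum fun i _ => ?_)
    refine le_trans (norm_sum_le _ _) (Finset.sum_le_sum fun j _ => ?_)
    rw [norm_mul, norm_mul, RCLike.norm_conj, hxy, hxy, hyy]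
    exact le_of_eq (by ring)
  calc A ^ 2 ≤ ‖W‖ ^ 2 := by nlinarith [norm_nonneg W]
  _ ≤ ‖(⟪W, W⟫ : ℂ)‖ := hWW
  _ ≤ _ := h3

/-- Pure-state core of the tight consecutive measurement theorem. -/
theorem pure_state_CMT {d n : ℕ} (hn : 2 ≤ n)
    (φ : Fin d → ℂ) (φs : Fin n → Fin d → ℂ)
    (hφ : star φ ⬝ᵥ φ = 1) (hφs : ∀ i, star (φs i) ⬝ᵥ φs i = 1)
    (V : ℝ) (hV : V = (1 / (n : ℝ)) * ∑ i, ‖star φ ⬝ᵥ φs i‖ ^ 2) :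
    (1 / ((n : ℝ) * ((n : ℝ) - 1))) * ∑ i, ∑ j,
        (if i ≠ j then ‖star φ ⬝ᵥ φs i‖ ^ 2 * ‖star (φs i) ⬝ᵥ φs j‖ ^ 2 else 0)
      ≥ ((n : ℝ) ^ 2 / ((n : ℝ) - 1) ^ 2) * V * (max 0 (V - 1 / (n : ℝ))) ^ 2 := by
  have key := test_key φ φs hφ hφs
  have := cmt_aux hn (fun i => ‖star φ ⬝ᵥ φs i‖) (fun i j => ‖star (φs i) ⬝ᵥ φs j‖)
    (fun i => norm_nonneg _) (fun i j => norm_nonneg _)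
    (fun i => by simp [hφs i]) (by simpa using key) V (by simpa using hV)
  simpa using this
end

section
/- Let $p \geq 2$, $q \geq p$ and $\omega \in [0,1]$ satisfy $\omega(\omega - \tfrac{1}{p})^2 \leq \frac{(p-1)^2}{q p^2}$ and $\omega \geq \tfrac{1}{p}$. Then $\omega \leq \frac{1}{3p}(2 + \Sigma^{-1} + \Sigma)$ where $\Sigma = \left(\frac{\Delta + \sqrt{\Delta^2 - 4}}{2}\right)^{1/3}$ and $\Delta = \frac{27p(p-1)^2}{q} - 2$. -/
set_option maxHeartbeats 1000000 in
/-- Solving the cubic inequality arising from the coupled-game bound for `CHSH_q(p)`. -/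
theorem cubic_inequality_solution (p q : ℕ) (hp : 2 ≤ p) (hq : p ≤ q)
    (ω : ℝ) (hω : ω ∈ Set.Icc (0 : ℝ) 1)
    (hωp : 1 / (p : ℝ) ≤ ω)
    (hcubic : ω * (ω - 1 / (p : ℝ)) ^ 2 ≤ ((p : ℝ) - 1) ^ 2 / ((q : ℝ) * (p : ℝ) ^ 2))
    (Δ Sig : ℝ)
    (hΔ : Δ = 27 * (p : ℝ) * ((p : ℝ) - 1) ^ 2 / (q : ℝ) - 2)
    (hΔ2 : 2 ≤ Δ)
    (hSig : Sig = ((Δ + Real.sqrt (Δ ^ 2 - 4)) / 2) ^ ((1 : ℝ) / 3)) :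
    ω ≤ (1 / (3 * (p : ℝ))) * (2 + Sig⁻¹ + Sig) := by
  have hp' : (2 : ℝ) ≤ (p : ℝ) := by exact_mod_cast hp
  have hq' : (p : ℝ) ≤ (q : ℝ) := by exact_mod_cast hq
  have hp0 : (0 : ℝ) < (p : ℝ) := by linarith
  have hq0 : (0 : ℝ) < (q : ℝ) := by linarith
  set y : ℝ := (Δ + Real.sqrt (Δ ^ 2 - 4)) / 2 with hy_def
  have hsq : (0:ℝ) ≤ Δ ^ 2 - 4 := by nlinarith
  have hsqrt0 : 0 ≤ Real.sqrt (Δ ^ 2 - 4) := Real.sqrt_nonneg _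
  have hy1 : (1:ℝ) ≤ y := by rw [hy_def]; linarith
  have hy0 : (0:ℝ) < y := by linarith
  have hS3 : Sig ^ 3 = y := by
    rw [hSig, ← Real.rpow_natCast (y ^ ((1:ℝ)/3)) 3, ← Real.rpow_mul hy0.le]
    norm_num
  have hS0 : 0 < Sig := by
    rw [hSig]; exact Real.rpow_pos_of_pos hy0 _
  -- y satisfies y^2 - Δ*y + 1 = 0
  have hyquad : y ^ 2 - Δ * y + 1 = 0 := by
    have := Real.sq_sqrt hsq
    rw [hy_def]; nlinarith [this]
  set t : ℝ := Sig + Sig⁻¹ with ht_def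
  have hSinv : Sig * Sig⁻¹ = 1 := mul_inv_cancel₀ hS0.ne'
  have ht2 : (2:ℝ) ≤ t := by
    rw [ht_def]
    nlinarith [sq_nonneg (Sig - 1), hS0, mul_inv_cancel₀ hS0.ne']
  -- t^3 = Δ + 3t
  have hycube : y + y⁻¹ = Δ := by
    have h : y ^ 2 + 1 = Δ * y := by linarith [hyquad]
    field_simp
    linear_combination h
  have hSinv3 : (Sig⁻¹) ^ 3 = y⁻¹ := by
    rw [← hS3]; rw [inv_pow]
  have ht3 : t ^ 3 = Δ + 3 * t := by
    have : t ^ 3 = Sig ^ 3 + (Sig⁻¹) ^ 3 + 3 * (Sig * Sig⁻¹) * t := by ring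
    rw [this, hS3, hSinv3, hSinv, hycube]; ring
  set r : ℝ := (2 + t) / (3 * (p:ℝ)) with hr_def
  have hr1p : 1 / (p:ℝ) ≤ r := by
    rw [hr_def, div_le_div_iff₀ hp0 (by positivity)]
    nlinarith
  have hfr : r * (r - 1 / (p:ℝ)) ^ 2 = ((p : ℝ) - 1) ^ 2 / ((q : ℝ) * (p : ℝ) ^ 2) := by
    have e : r * (r - 1 / (p:ℝ)) ^ 2 = (t^3 - 3*t + 2) / (27 * (p:ℝ)^3) := by
      rw [hr_def]; field_simp; ring
    rw [e, ht3, hΔ]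
    field_simp
    ring
  have key : ω ≤ r := by
    by_contra h
    push_neg at h
    have h1 : 0 ≤ r - 1 / (p:ℝ) := by linarith
    have h2 : 0 < ω - r := by linarith
    have : r * (r - 1 / (p:ℝ)) ^ 2 < ω * (ω - 1 / (p:ℝ)) ^ 2 := by
      have hr0 : 0 < r := lt_of_lt_of_le (by positivity) hr1p
      nlinarith [mul_pos (mul_pos hr0 h2) h2, mul_nonneg (mul_nonneg hr0.le h1) h2.le,
        mul_nonneg h2.le (sq_nonneg (ω - 1 / (p:ℝ)))]
    rw [hfr] at this
    linarith [hcubic]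
  calc ω ≤ r := key
    _ = (1 / (3 * (p : ℝ))) * (2 + Sig⁻¹ + Sig) := by rw [hr_def, ht_def]; ring
end

section
/- Let $P_0, P_1$ be orthogonal projections and $\sigma_0, \sigma_1$ density operators on a finite-dimensional Hilbert space. Define $V = \frac{1}{2}(\mathrm{Tr}(P_0\sigma_0) + \mathrm{Tr}(P_1\sigma_1))$, $E = \frac{1}{2}(\mathrm{Tr}(P_1 P_0 \sigma_0 P_0 P_1) + \mathrm{Tr}(P_0 P_1 \sigma_1 P_1 P_0))$, and $F = \|\sqrt{\sigma_0}\sqrt{\sigma_1}\|_1$. Then $E \geq V\left(\max\{0, (2V-1)F - 2\sqrt{V(1-V)}\sqrt{1-F^2}\}\right)^2$. -/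
open Matrix BigOperators ComplexOrder

/-- The square root of a positive semidefinite matrix, as defined in the older Mathlib. -/
noncomputable def Matrix.PosSemidef.sqrt {n : Type*} [Fintype n] [DecidableEq n] {𝕜 : Type*}
    [RCLike 𝕜] {A : Matrix n n 𝕜} (hA : A.PosSemidef) : Matrix n n 𝕜 :=
  hA.1.eigenvectorUnitary.1 * diagonal ((↑) ∘ (√·) ∘ hA.1.eigenvalues) *
  (star hA.1.eigenvectorUnitary : Matrix n n 𝕜)

/-- The trace norm of a complex matrix: `‖A‖₁ = Tr √(Aᴴ A)`. -/
noncomputable def traceNorm {d : ℕ} (A : Matrix (Fin d) (Fin d) ℂ) : ℝ :=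
  ((Matrix.posSemidef_conjTranspose_mul_self A).sqrt).trace.re


lemma Matrix.PosSemidef.posSemidef_sqrt {n : Type*} [Fintype n] [DecidableEq n] {𝕜 : Type*}
    [RCLike 𝕜] {A : Matrix n n 𝕜} (hA : A.PosSemidef) : hA.sqrt.PosSemidef := by
  unfold Matrix.PosSemidef.sqrt
  exact (posSemidef_diagonal_iff.2 fun i => by
    simp only [Function.comp_apply]
    exact RCLike.ofReal_nonneg.2 (Real.sqrt_nonneg _)).mul_mul_conjTranspose_same _

lemma Matrix.PosSemidef.sqrt_mul_self {n : Type*} [Fintype n] [DecidableEq n] {𝕜 : Type*}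
    [RCLike 𝕜] {A : Matrix n n 𝕜} (hA : A.PosSemidef) : hA.sqrt * hA.sqrt = A := by
  conv_rhs => rw [hA.1.spectral_theorem, Unitary.conjStarAlgAut_apply]
  unfold Matrix.PosSemidef.sqrt
  have hU : (star hA.1.eigenvectorUnitary : Matrix n n 𝕜) * hA.1.eigenvectorUnitary.1 = 1 :=
    Unitary.coe_star_mul_self _
  calc _ = hA.1.eigenvectorUnitary.1 * (diagonal ((↑) ∘ (√·) ∘ hA.1.eigenvalues) *
        ((star hA.1.eigenvectorUnitary : Matrix n n 𝕜) * hA.1.eigenvectorUnitary.1) *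
        diagonal ((↑) ∘ (√·) ∘ hA.1.eigenvalues)) * (star hA.1.eigenvectorUnitary : Matrix n n 𝕜) := by
        simp only [Matrix.mul_assoc]
    _ = _ := by
      rw [hU, Matrix.mul_one, diagonal_mul_diagonal]
      congr 3
      funext i
      simp only [Function.comp_apply]
      rw [← RCLike.ofReal_mul, Real.mul_self_sqrt (hA.eigenvalues_nonneg i)]

local notation "⟪" x ", " y "⟫" => @inner ℂ _ _ x y


lemma rcofReal (r : ℝ) : (RCLike.ofReal r : ℂ) = Complex.ofReal r := rfl

private lemma sq_le_self_imp {r : ℝ} (h0 : 0 ≤ r) (h : r ^ 2 ≤ r) : r ≤ 1 := by nlinarith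

private lemma pos_of_sum_sq {a b : ℝ} (ha : 0 ≤ a) (hb0 : 0 ≤ b) (hb : b ≤ 1)
    (h : 1 < a ^ 2 + b ^ 2) : 0 < a := by nlinarith

private lemma avg_sq_le_one {a b : ℝ} (ha0 : 0 ≤ a) (ha : a ≤ 1) (hb0 : 0 ≤ b) (hb : b ≤ 1) :
    (a ^ 2 + b ^ 2) / 2 ≤ 1 := by nlinarith

section Abstract
variable {H : Type*} [NormedAddCommGroup H] [InnerProductSpace ℂ H]

/-- Algebraic core of the angle triangle inequality. -/
lemma inner_abs_triangle_core (x y z : H) (hx : ‖x‖ = 1) (hy : ‖y‖ = 1) (hz : ‖z‖ = 1) :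
    ‖⟪x, y⟫‖ * ‖⟪y, z⟫‖
      - Real.sqrt (1 - ‖⟪x, y⟫‖ ^ 2) * Real.sqrt (1 - ‖⟪y, z⟫‖ ^ 2)
      ≤ ‖⟪x, z⟫‖ := by
  set a : ℂ := ⟪y, x⟫ with ha
  set b : ℂ := ⟪y, z⟫ with hb
  set p : H := x - a • y with hp
  set q : H := z - b • y with hq
  have hyy : ⟪y, y⟫ = 1 := by
    rw [inner_self_eq_norm_sq_to_K, hy]; norm_num
  have hyp : ⟪y, p⟫ = 0 := by
    simp [hp, inner_sub_right, inner_smul_right, hyy, hy, ha]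
  have hyq : ⟪y, q⟫ = 0 := by
    simp [hq, inner_sub_right, inner_smul_right, hyy, hy, hb]
  have hpy : ⟪p, y⟫ = 0 := by
    rw [← inner_conj_symm, hyp, map_zero]
  have hqy : ⟪q, y⟫ = 0 := by
    rw [← inner_conj_symm, hyq, map_zero]
  have hx' : x = a • y + p := by simp [hp]
  have hz' : z = b • y + q := by simp [hq]
  have hxz : ⟪x, z⟫ = (starRingEnd ℂ) a * b + ⟪p, q⟫ := by
    conv_lhs => rw [hx', hz']
    simp [inner_add_left, inner_add_right, inner_smul_left, inner_smul_right,
      hyy, hyp, hpy, hyq, hy]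
    ring
  have conjmul : ∀ c : ℂ, (starRingEnd ℂ) c * c = ((‖c‖ : ℝ) : ℂ) ^ 2 := by
    intro c
    rw [mul_comm, Complex.mul_conj, Complex.normSq_eq_norm_sq]
    norm_cast
  have hnp : ‖p‖ ^ 2 = 1 - ‖a‖ ^ 2 := by
    have h1 : (⟪x, x⟫ : ℂ) = 1 := by rw [inner_self_eq_norm_sq_to_K, hx]; norm_num
    conv_lhs at h1 => rw [hx']
    simp only [inner_add_left, inner_add_right, inner_smul_left, inner_smul_right,
      hyy, hyp, hpy] at h1
    simp at h1
    rw [mul_comm, conjmul a] at h1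
    have h2 : (⟪p, p⟫ : ℂ) = ((1 - ‖a‖ ^ 2 : ℝ) : ℂ) := by
      push_cast
      rw [inner_self_eq_norm_sq_to_K]
      linear_combination h1
    have h3 := congrArg Complex.re h2
    rw [Complex.ofReal_re] at h3
    rw [← inner_self_eq_norm_sq (𝕜 := ℂ) p]
    exact h3
  have hnq : ‖q‖ ^ 2 = 1 - ‖b‖ ^ 2 := by
    have h1 : (⟪z, z⟫ : ℂ) = 1 := by rw [inner_self_eq_norm_sq_to_K, hz]; norm_num
    conv_lhs at h1 => rw [hz']
    simp only [inner_add_left, inner_add_right, inner_smul_left, inner_smul_right,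
      hyy, hyq, hqy] at h1
    simp at h1
    rw [mul_comm, conjmul b] at h1
    have h2 : (⟪q, q⟫ : ℂ) = ((1 - ‖b‖ ^ 2 : ℝ) : ℂ) := by
      push_cast
      rw [inner_self_eq_norm_sq_to_K]
      linear_combination h1
    have h3 := congrArg Complex.re h2
    rw [Complex.ofReal_re] at h3
    rw [← inner_self_eq_norm_sq (𝕜 := ℂ) q]
    exact h3
  have habs_xy : ‖⟪x, y⟫‖ = ‖a‖ := by
    rw [ha, ← inner_conj_symm x y, Complex.norm_conj]
  have habs_yz : ‖⟪y, z⟫‖ = ‖b‖ := rfl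
  have key : ‖⟪x, z⟫‖ ≥ ‖a‖ * ‖b‖ - ‖p‖ * ‖q‖ := by
    have h1 : ‖(starRingEnd ℂ) a * b‖ = ‖a‖ * ‖b‖ := by
      rw [norm_mul, Complex.norm_conj]
    have h2 : ‖⟪p, q⟫‖ ≤ ‖p‖ * ‖q‖ := by
      simpa [] using norm_inner_le_norm (𝕜 := ℂ) p q
    calc ‖a‖ * ‖b‖ - ‖p‖ * ‖q‖
        ≤ ‖(starRingEnd ℂ) a * b‖ - ‖⟪p, q⟫‖ := by
          rw [h1]; linarith
      _ ≤ ‖(starRingEnd ℂ) a * b + ⟪p, q⟫‖ := by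
          have h3 := norm_sub_norm_le ((starRingEnd ℂ) a * b) (-⟪p, q⟫)
          simpa [sub_neg_eq_add] using h3
      _ = ‖⟪x, z⟫‖ := by rw [hxz]
  have hpnorm : ‖p‖ = Real.sqrt (1 - ‖a‖ ^ 2) := by
    rw [← hnp, Real.sqrt_sq (norm_nonneg p)]
  have hqnorm : ‖q‖ = Real.sqrt (1 - ‖b‖ ^ 2) := by
    rw [← hnq, Real.sqrt_sq (norm_nonneg q)]
  rw [habs_xy, habs_yz, ← hpnorm, ← hqnorm]
  exact key

lemma arccos_le_of_cos_le {c s : ℝ} (hs0 : 0 ≤ s) (hc1 : c ≤ 1)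
    (h : Real.cos s ≤ c) : Real.arccos c ≤ s := by
  by_contra hcon
  push_neg at hcon
  have hc1' : -1 ≤ c := le_trans (Real.neg_one_le_cos s) h
  have := Real.cos_lt_cos_of_nonneg_of_le_pi hs0 (Real.arccos_le_pi c) hcon
  rw [Real.cos_arccos hc1' hc1] at this
  linarith

/-- The Fubini–Study / angle triangle inequality. -/
lemma arccos_inner_triangle (x y z : H) (hx : ‖x‖ = 1) (hy : ‖y‖ = 1) (hz : ‖z‖ = 1) :
    Real.arccos (‖⟪x, z⟫‖) ≤
      Real.arccos (‖⟪x, y⟫‖) + Real.arccos (‖⟪y, z⟫‖) := by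
  set a := ‖⟪x, y⟫‖ with ha
  set b := ‖⟪y, z⟫‖ with hb
  set c := ‖⟪x, z⟫‖ with hc
  have bd : ∀ (u v : H), ‖u‖ = 1 → ‖v‖ = 1 → ‖⟪u, v⟫‖ ≤ 1 := by
    intro u v hu hv
    have := norm_inner_le_norm (𝕜 := ℂ) u v
    rwa [hu, hv, mul_one] at this
  have ha1 : a ≤ 1 := bd x y hx hy
  have hb1 : b ≤ 1 := bd y z hy hz
  have hc1 : c ≤ 1 := bd x z hx hz
  have ha0 : 0 ≤ a := norm_nonneg _
  have hb0 : 0 ≤ b := norm_nonneg _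
  have key := inner_abs_triangle_core x y z hx hy hz
  rw [← ha, ← hb, ← hc] at key
  have hcos : Real.cos (Real.arccos a + Real.arccos b) ≤ c := by
    rw [Real.cos_add, Real.cos_arccos (by linarith) ha1, Real.cos_arccos (by linarith) hb1,
      Real.sin_arccos, Real.sin_arccos]
    linarith
  have hs0 : 0 ≤ Real.arccos a + Real.arccos b :=
    add_nonneg (Real.arccos_nonneg a) (Real.arccos_nonneg b)
  have hsπ : Real.arccos a + Real.arccos b ≤ Real.pi := by
    have h1 : Real.arccos a ≤ Real.pi / 2 := Real.arccos_le_pi_div_two.2 ha0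
    have h2 : Real.arccos b ≤ Real.pi / 2 := Real.arccos_le_pi_div_two.2 hb0
    linarith
  exact arccos_le_of_cos_le hs0 hc1 hcos

/-- For `a, b ∈ [0,1]` with `a² + b² = 2V ≥ 1`, `arccos a + arccos b ≤ 2 arccos √V`. -/
lemma arccos_add_arccos_le {a b V : ℝ} (ha0 : 0 ≤ a) (ha1 : a ≤ 1) (hb0 : 0 ≤ b)
    (hb1 : b ≤ 1) (hV : a ^ 2 + b ^ 2 = 2 * V) (hVhalf : 1 ≤ 2 * V) :
    Real.arccos a + Real.arccos b ≤ 2 * Real.arccos (Real.sqrt V) := by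
  have hV0 : 0 ≤ V := by nlinarith
  have hV1 : V ≤ 1 := by nlinarith
  have hsV1 : Real.sqrt V ≤ 1 := by
    rw [show (1:ℝ) = Real.sqrt 1 by simp]
    exact Real.sqrt_le_sqrt hV1
  have hsV0 : 0 ≤ Real.sqrt V := Real.sqrt_nonneg V
  -- cos of RHS
  have hrhs : Real.cos (2 * Real.arccos (Real.sqrt V)) = 2 * V - 1 := by
    rw [Real.cos_two_mul, Real.cos_arccos (by linarith) hsV1, Real.sq_sqrt hV0]
  -- cos of LHS
  have hlhs : Real.cos (Real.arccos a + Real.arccos b)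
      = a * b - Real.sqrt (1 - a ^ 2) * Real.sqrt (1 - b ^ 2) := by
    rw [Real.cos_add, Real.cos_arccos (by linarith) ha1, Real.cos_arccos (by linarith) hb1,
      Real.sin_arccos, Real.sin_arccos]
  -- the algebraic inequality
  have halg : 2 * V - 1 ≤ a * b - Real.sqrt (1 - a ^ 2) * Real.sqrt (1 - b ^ 2) := by
    have hL0 : 0 ≤ a * b + 1 - a ^ 2 - b ^ 2 := by nlinarith
    have hs : Real.sqrt (1 - a ^ 2) * Real.sqrt (1 - b ^ 2)
        = Real.sqrt ((1 - a ^ 2) * (1 - b ^ 2)) := by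
      rw [← Real.sqrt_mul (by nlinarith)]
    have hsle : Real.sqrt ((1 - a ^ 2) * (1 - b ^ 2)) ≤ a * b + 1 - a ^ 2 - b ^ 2 := by
      rw [show a * b + 1 - a ^ 2 - b ^ 2 = Real.sqrt ((a * b + 1 - a ^ 2 - b ^ 2) ^ 2) by
        rw [Real.sqrt_sq hL0]]
      apply Real.sqrt_le_sqrt
      nlinarith [sq_nonneg (a - b)]
    rw [hs]
    linarith
  -- conclude via antitonicity of cos on [0, Real.pi]
  have h1 : Real.arccos a ≤ Real.pi / 2 := Real.arccos_le_pi_div_two.2 ha0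
  have h2 : Real.arccos b ≤ Real.pi / 2 := Real.arccos_le_pi_div_two.2 hb0
  by_contra hcon
  push_neg at hcon
  have := Real.cos_lt_cos_of_nonneg_of_le_pi
    (by have := Real.arccos_nonneg (Real.sqrt V); linarith) (by linarith) hcon
  rw [hrhs, hlhs] at this
  linarith

set_option maxHeartbeats 1000000 in
/-- The consecutive measurement theorem for abstract vectors. -/
lemma pure_CMT (x0 x1 p0 p1 q0 q1 : H)
    (hx0 : ‖x0‖ = 1) (hx1 : ‖x1‖ = 1)
    (hp0x : ⟪p0, x0⟫ = ⟪p0, p0⟫)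
    (hp1x : ⟪p1, x1⟫ = ⟪p1, p1⟫)
    (hq0 : ⟪q0, p1⟫ = ⟪p0, p1⟫)
    (hq1 : ⟪q1, p0⟫ = ⟪p1, p0⟫)
    (F : ℝ) (hFnn : 0 ≤ F) (hF : F ≤ (⟪x0, x1⟫).re) :
    (‖q0‖ ^ 2 + ‖q1‖ ^ 2) / 2 ≥ ((‖p0‖ ^ 2 + ‖p1‖ ^ 2) / 2) *
      (max 0 ((2 * ((‖p0‖ ^ 2 + ‖p1‖ ^ 2) / 2) - 1) * F
        - 2 * Real.sqrt (((‖p0‖ ^ 2 + ‖p1‖ ^ 2) / 2) * (1 - (‖p0‖ ^ 2 + ‖p1‖ ^ 2) / 2))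
          * Real.sqrt (1 - F ^ 2))) ^ 2 := by
  set V : ℝ := (‖p0‖ ^ 2 + ‖p1‖ ^ 2) / 2 with hVdef
  set δ : ℝ := (2 * V - 1) * F - 2 * Real.sqrt (V * (1 - V)) * Real.sqrt (1 - F ^ 2) with hδdef
  have hVnn : 0 ≤ V := by positivity
  rcases le_or_gt δ 0 with hδ | hδ
  · rw [max_eq_left hδ]
    have h0 : V * (0:ℝ) ^ 2 = 0 := by ring
    rw [h0]
    positivity
  rw [max_eq_right hδ.le]
  -- basic bounds
  have habs_p0x0 : ‖⟪p0, x0⟫‖ = ‖p0‖ ^ 2 := by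
    rw [hp0x, inner_self_eq_norm_sq_to_K, rcofReal, norm_pow, Complex.norm_real, Real.norm_eq_abs,
      abs_of_nonneg (norm_nonneg p0)]
  have habs_p1x1 : ‖⟪p1, x1⟫‖ = ‖p1‖ ^ 2 := by
    rw [hp1x, inner_self_eq_norm_sq_to_K, rcofReal, norm_pow, Complex.norm_real, Real.norm_eq_abs,
      abs_of_nonneg (norm_nonneg p1)]
  have hn0 : ‖p0‖ ≤ 1 := by
    have h2 : ‖⟪p0, x0⟫‖ ≤ ‖p0‖ := by
      have := norm_inner_le_norm (𝕜 := ℂ) p0 x0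
      rwa [hx0, mul_one] at this
    rw [habs_p0x0] at h2
    exact sq_le_self_imp (norm_nonneg p0) h2
  have hn1 : ‖p1‖ ≤ 1 := by
    have h2 : ‖⟪p1, x1⟫‖ ≤ ‖p1‖ := by
      have := norm_inner_le_norm (𝕜 := ℂ) p1 x1
      rwa [hx1, mul_one] at this
    rw [habs_p1x1] at h2
    exact sq_le_self_imp (norm_nonneg p1) h2
  have hV1 : V ≤ 1 := by
    rw [hVdef]
    exact avg_sq_le_one (norm_nonneg p0) hn0 (norm_nonneg p1) hn1
  -- from δ > 0 : 2V - 1 > 0 and F > 0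
  have hprod : 0 < (2 * V - 1) * F := by
    have h1 : 0 ≤ 2 * Real.sqrt (V * (1 - V)) * Real.sqrt (1 - F ^ 2) := by positivity
    rw [hδdef] at hδ; linarith
  have h2V : 0 < 2 * V - 1 := by
    rcases lt_trichotomy (2 * V - 1) 0 with h | h | h
    · exact absurd hprod (not_lt.2 (mul_nonpos_iff.2 (Or.inr ⟨h.le, hFnn⟩)))
    · rw [h] at hprod; simp at hprod
    · exact h
  have hFpos : 0 < F := by
    rcases hFnn.lt_or_eq with h | h
    · exact h
    · exfalso; rw [← h, mul_zero] at hprod; exact lt_irrefl 0 hprod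
  have habs_x0x1_le1 : ‖⟪x0, x1⟫‖ ≤ 1 := by
    have := norm_inner_le_norm (𝕜 := ℂ) x0 x1
    rwa [hx0, hx1, mul_one] at this
  have hF1 : F ≤ 1 :=
    le_trans hF ((Complex.re_le_norm _).trans habs_x0x1_le1)
  have h2V' : 1 < ‖p0‖ ^ 2 + ‖p1‖ ^ 2 := by
    rw [hVdef] at h2V; linarith
  have hp0pos : 0 < ‖p0‖ :=
    pos_of_sum_sq (norm_nonneg p0) (norm_nonneg p1) hn1 h2V'
  have hp1pos : 0 < ‖p1‖ :=
    pos_of_sum_sq (norm_nonneg p1) (norm_nonneg p0) hn0 (by linarith)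
  -- unit vectors along p0, p1
  set u0 : H := ((‖p0‖ : ℂ))⁻¹ • p0 with hu0def
  set u1 : H := ((‖p1‖ : ℂ))⁻¹ • p1 with hu1def
  have hnu0 : ‖u0‖ = 1 := by
    rw [hu0def, norm_smul, norm_inv, Complex.norm_real, Real.norm_eq_abs,
      abs_of_nonneg (norm_nonneg p0)]
    field_simp
  have hnu1 : ‖u1‖ = 1 := by
    rw [hu1def, norm_smul, norm_inv, Complex.norm_real, Real.norm_eq_abs,
      abs_of_nonneg (norm_nonneg p1)]
    field_simp
  set t : ℝ := ‖⟪p0, p1⟫‖ with htdef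
  have htnn : 0 ≤ t := norm_nonneg _
  -- Cauchy–Schwarz bounds
  have hCS0 : t ≤ ‖q0‖ * ‖p1‖ := by
    rw [htdef, ← hq0]
    have := norm_inner_le_norm (𝕜 := ℂ) q0 p1
    exact this
  have hCS1 : t ≤ ‖q1‖ * ‖p0‖ := by
    have habs : ‖⟪p0, p1⟫‖ = ‖⟪p1, p0⟫‖ := by
      rw [← inner_conj_symm p1 p0, Complex.norm_conj]
    rw [htdef, habs, ← hq1]
    have := norm_inner_le_norm (𝕜 := ℂ) q1 p0
    exact this
  -- inner products with the unit vectors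
  have habs_u0x0 : ‖⟪u0, x0⟫‖ = ‖p0‖ := by
    rw [hu0def, inner_smul_left]
    simp only [norm_mul, norm_inv, Complex.norm_conj, Complex.norm_real, Real.norm_eq_abs,
      abs_of_nonneg (norm_nonneg p0), habs_p0x0]
    field_simp
  have habs_u1x1 : ‖⟪u1, x1⟫‖ = ‖p1‖ := by
    rw [hu1def, inner_smul_left]
    simp only [norm_mul, norm_inv, Complex.norm_conj, Complex.norm_real, Real.norm_eq_abs,
      abs_of_nonneg (norm_nonneg p1), habs_p1x1]
    field_simp
  have habs_u0u1 : ‖⟪u0, u1⟫‖ = ‖p0‖⁻¹ * ‖p1‖⁻¹ * t := by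
    rw [hu0def, hu1def, inner_smul_left, inner_smul_right, htdef]
    simp only [norm_mul, norm_inv, Complex.norm_conj, Complex.norm_real, Real.norm_eq_abs,
      abs_of_nonneg (norm_nonneg p0), abs_of_nonneg (norm_nonneg p1)]
    ring
  -- triangle inequalities
  have htri1 : Real.arccos (‖⟪u0, u1⟫‖) ≤
      Real.arccos (‖⟪u0, x0⟫‖) + Real.arccos (‖⟪x0, u1⟫‖) :=
    arccos_inner_triangle u0 x0 u1 hnu0 hx0 hnu1
  have htri2 : Real.arccos (‖⟪x0, u1⟫‖) ≤
      Real.arccos (‖⟪x0, x1⟫‖) + Real.arccos (‖⟪x1, u1⟫‖) :=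
    arccos_inner_triangle x0 x1 u1 hx0 hx1 hnu1
  have habs_x1u1 : ‖⟪x1, u1⟫‖ = ‖p1‖ := by
    rw [← inner_conj_symm x1 u1, Complex.norm_conj, habs_u1x1]
  -- arccos |⟨x0,x1⟩| ≤ arccos F
  have habs_x0x1 : F ≤ ‖⟪x0, x1⟫‖ := hF.trans (Complex.re_le_norm _)
  have harcF : Real.arccos (‖⟪x0, x1⟫‖) ≤ Real.arccos F := by
    apply arccos_le_of_cos_le (Real.arccos_nonneg F) habs_x0x1_le1
    rw [Real.cos_arccos (by linarith) hF1]
    exact habs_x0x1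
  -- arccos ‖p0‖ + arccos ‖p1‖ ≤ 2 arccos √V
  have harcV : Real.arccos ‖p0‖ + Real.arccos ‖p1‖ ≤ 2 * Real.arccos (Real.sqrt V) := by
    apply arccos_add_arccos_le (norm_nonneg p0) hn0 (norm_nonneg p1) hn1
    · rw [hVdef]; ring
    · linarith
  -- the total angle bound
  set s : ℝ := 2 * Real.arccos (Real.sqrt V) + Real.arccos F with hsdef
  have hchain : Real.arccos (‖⟪u0, u1⟫‖) ≤ s := by
    rw [hsdef]
    calc Real.arccos (‖⟪u0, u1⟫‖)
        ≤ Real.arccos (‖⟪u0, x0⟫‖) + Real.arccos (‖⟪x0, u1⟫‖) := htri1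
      _ ≤ Real.arccos (‖⟪u0, x0⟫‖) + (Real.arccos (‖⟪x0, x1⟫‖)
            + Real.arccos (‖⟪x1, u1⟫‖)) := by linarith
      _ = Real.arccos ‖p0‖ + Real.arccos (‖⟪x0, x1⟫‖) + Real.arccos ‖p1‖ := by
            rw [habs_u0x0, habs_x1u1]; ring
      _ ≤ Real.arccos ‖p0‖ + Real.arccos F + Real.arccos ‖p1‖ := by linarith
      _ ≤ 2 * Real.arccos (Real.sqrt V) + Real.arccos F := by linarith
  -- δ = cos s
  have hsV0 : 0 ≤ Real.sqrt V := Real.sqrt_nonneg V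
  have hsV1 : Real.sqrt V ≤ 1 := by
    rw [show (1:ℝ) = Real.sqrt 1 by simp]
    exact Real.sqrt_le_sqrt hV1
  have hδcos : Real.cos s = δ := by
    rw [hsdef, Real.cos_add, Real.cos_two_mul, Real.sin_two_mul,
      Real.cos_arccos (by linarith) hsV1, Real.cos_arccos (by linarith) hF1,
      Real.sin_arccos, Real.sin_arccos, Real.sq_sqrt hVnn, hδdef]
    have h9 : Real.sqrt (1 - V) * Real.sqrt V = Real.sqrt (V * (1 - V)) := by
      rw [← Real.sqrt_mul (by linarith), mul_comm]
    rw [← h9]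
    ring
  -- s ≤ π/2
  have harc2 : Real.arccos (Real.sqrt V) < Real.pi / 2 := by
    have hsVpos : 0 < Real.sqrt V := Real.sqrt_pos.2 (by linarith)
    rcases lt_or_ge (Real.arccos (Real.sqrt V)) (Real.pi / 2) with h | h
    · exact h
    · exfalso
      have := Real.arccos_le_pi_div_two.2 hsVpos.le
      have heq : Real.arccos (Real.sqrt V) = Real.pi / 2 := le_antisymm this h
      have := Real.cos_arccos (by linarith) hsV1
      rw [heq, Real.cos_pi_div_two] at this
      linarith
  have hspi2 : s ≤ Real.pi / 2 := by
    by_contra hcon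
    push_neg at hcon
    have hub : s < Real.pi + Real.pi / 2 := by
      have h1 : Real.arccos F ≤ Real.pi / 2 := Real.arccos_le_pi_div_two.2 hFpos.le
      rw [hsdef]; linarith
    have := Real.cos_neg_of_pi_div_two_lt_of_lt hcon hub
    rw [hδcos] at this
    linarith
  -- conclude cos-comparison
  have hc01_le1 : ‖⟪u0, u1⟫‖ ≤ 1 := by
    have := norm_inner_le_norm (𝕜 := ℂ) u0 u1
    rwa [hnu0, hnu1, mul_one] at this
  have hkey : δ ≤ ‖⟪u0, u1⟫‖ := by
    have h1 : Real.cos s ≤ Real.cos (Real.arccos (‖⟪u0, u1⟫‖)) := by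
      rcases eq_or_lt_of_le hchain with h | h
      · rw [← h]
      · exact (Real.cos_lt_cos_of_nonneg_of_le_pi (Real.arccos_nonneg _)
          (by linarith [Real.pi_pos]) h).le
    rw [Real.cos_arccos (by linarith [norm_nonneg ⟪u0, u1⟫]) hc01_le1, hδcos] at h1
    exact h1
  have ht : δ * (‖p0‖ * ‖p1‖) ≤ t := by
    rw [habs_u0u1] at hkey
    calc δ * (‖p0‖ * ‖p1‖) ≤ (‖p0‖⁻¹ * ‖p1‖⁻¹ * t) * (‖p0‖ * ‖p1‖) :=
          mul_le_mul_of_nonneg_right hkey (by positivity)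
      _ = t := by field_simp
  have hq0' : δ * ‖p0‖ ≤ ‖q0‖ := by
    have h := ht.trans hCS0
    rw [← mul_assoc] at h
    exact le_of_mul_le_mul_right h hp1pos
  have hq1' : δ * ‖p1‖ ≤ ‖q1‖ := by
    have h := ht.trans hCS1
    rw [show δ * (‖p0‖ * ‖p1‖) = δ * ‖p1‖ * ‖p0‖ by ring] at h
    exact le_of_mul_le_mul_right h hp0pos
  have he0 : δ ^ 2 * ‖p0‖ ^ 2 ≤ ‖q0‖ ^ 2 :=
    calc δ ^ 2 * ‖p0‖ ^ 2 = (δ * ‖p0‖) * (δ * ‖p0‖) := by ring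
      _ ≤ ‖q0‖ * ‖q0‖ := mul_self_le_mul_self (mul_nonneg hδ.le hp0pos.le) hq0'
      _ = ‖q0‖ ^ 2 := by ring
  have he1 : δ ^ 2 * ‖p1‖ ^ 2 ≤ ‖q1‖ ^ 2 :=
    calc δ ^ 2 * ‖p1‖ ^ 2 = (δ * ‖p1‖) * (δ * ‖p1‖) := by ring
      _ ≤ ‖q1‖ * ‖q1‖ := mul_self_le_mul_self (mul_nonneg hδ.le hp1pos.le) hq1'
      _ = ‖q1‖ ^ 2 := by ring
  have hfin : (‖p0‖ ^ 2 + ‖p1‖ ^ 2) / 2 * δ ^ 2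
      = (δ ^ 2 * ‖p0‖ ^ 2 + δ ^ 2 * ‖p1‖ ^ 2) / 2 := by ring
  clear_value δ V
  rw [ge_iff_le, hVdef, hfin]
  linarith

end Abstract


section MatrixSide
variable {d : ℕ}

/-- Flatten a matrix into a Euclidean space vector. -/
noncomputable def toV (M : Matrix (Fin d) (Fin d) ℂ) : EuclideanSpace ℂ (Fin d × Fin d) :=
  (WithLp.equiv 2 ((Fin d × Fin d) → ℂ)).symm (fun p => M p.1 p.2)

lemma inner_toV (X Y : Matrix (Fin d) (Fin d) ℂ) : ⟪toV X, toV Y⟫ = (Xᴴ * Y).trace := by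
  have h1 : ⟪toV X, toV Y⟫ = ∑ a : Fin d, ∑ b : Fin d, (starRingEnd ℂ) (X a b) * Y a b := by
    simp only [PiLp.inner_apply, RCLike.inner_apply, toV, WithLp.equiv_symm_apply, PiLp.toLp_apply]
    rw [Fintype.sum_prod_type]
    exact Finset.sum_congr rfl fun a _ => Finset.sum_congr rfl fun b _ => mul_comm _ _
  have h2 : (Xᴴ * Y).trace = ∑ b : Fin d, ∑ a : Fin d, (starRingEnd ℂ) (X a b) * Y a b := by
    simp only [Matrix.trace, Matrix.diag_apply, Matrix.mul_apply,
      Matrix.conjTranspose_apply, starRingEnd_apply]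
  rw [h1, h2, Finset.sum_comm]

/-- A unitary achieving the trace norm. -/
lemma exists_unitary_traceNorm (M : Matrix (Fin d) (Fin d) ℂ) :
    ∃ W : Matrix (Fin d) (Fin d) ℂ, W * Wᴴ = 1 ∧ Wᴴ * W = 1 ∧
      (M * W).trace = ((traceNorm M : ℝ) : ℂ) := by
  have hKpsd : (Mᴴ * M).PosSemidef := Matrix.posSemidef_conjTranspose_mul_self M
  have hH : (Mᴴ * M).IsHermitian := hKpsd.1
  set Vu : Matrix (Fin d) (Fin d) ℂ := (hH.eigenvectorUnitary : Matrix (Fin d) (Fin d) ℂ)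
    with hVudef
  have hVu1 : Vuᴴ * Vu = 1 := by
    rw [← Matrix.star_eq_conjTranspose]
    exact Unitary.coe_star_mul_self hH.eigenvectorUnitary
  have hVu2 : Vu * Vuᴴ = 1 := by
    rw [← Matrix.star_eq_conjTranspose]
    exact Unitary.coe_mul_star_self hH.eigenvectorUnitary
  set ev : Fin d → ℝ := hH.eigenvalues with hevdef
  have hev : ∀ i, 0 ≤ ev i := fun i => hKpsd.eigenvalues_nonneg i
  set D : Matrix (Fin d) (Fin d) ℂ := Matrix.diagonal (fun i => (ev i : ℂ)) with hDdef
  have hspec : Mᴴ * M = Vu * D * Vuᴴ := by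
    have := hH.spectral_theorem
    rw [Unitary.conjStarAlgAut_apply] at this
    exact this
  set N : Matrix (Fin d) (Fin d) ℂ := M * Vu with hNdef
  have hNN : Nᴴ * N = D := by
    rw [hNdef, Matrix.conjTranspose_mul]
    calc Vuᴴ * Mᴴ * (M * Vu) = Vuᴴ * (Mᴴ * M) * Vu := by
          rw [Matrix.mul_assoc, Matrix.mul_assoc, Matrix.mul_assoc]
      _ = Vuᴴ * (Vu * D * Vuᴴ) * Vu := by rw [hspec]
      _ = (Vuᴴ * Vu) * D * (Vuᴴ * Vu) := by
          simp only [Matrix.mul_assoc]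
      _ = D := by rw [hVu1]; simp
  -- the normalized columns of N
  set c : Fin d → EuclideanSpace ℂ (Fin d) := fun j =>
    (WithLp.equiv 2 (Fin d → ℂ)).symm (fun i => ((Real.sqrt (ev j) : ℝ) : ℂ)⁻¹ * N i j)
    with hcdef
  have hinner : ∀ i j : Fin d, ⟪c i, c j⟫
      = ((Real.sqrt (ev i) : ℝ) : ℂ)⁻¹ * ((Real.sqrt (ev j) : ℝ) : ℂ)⁻¹ * D i j := by
    intro i j
    have hentry : D i j = ∑ k, (starRingEnd ℂ) (N k i) * N k j := by
      rw [← hNN]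
      simp only [Matrix.mul_apply, Matrix.conjTranspose_apply, starRingEnd_apply]
    simp only [hcdef, PiLp.inner_apply, RCLike.inner_apply, WithLp.equiv_symm_apply, PiLp.toLp_apply,
      _root_.map_mul, map_inv₀, Complex.conj_ofReal]
    rw [hentry, Finset.mul_sum]
    congr 1
    ext k
    ring
  have horth : Orthonormal ℂ (Set.restrict {j | ev j ≠ 0} c) := by
    rw [orthonormal_iff_ite]
    rintro ⟨i, hi⟩ ⟨j, hj⟩
    change ⟪c i, c j⟫ = _
    rw [hinner i j]
    by_cases hij : i = j
    · subst hij
      have heq : (⟨i, hi⟩ : {j | ev j ≠ 0}) = ⟨i, hj⟩ := rfl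
      rw [if_pos heq]
      simp only [hDdef, Matrix.diagonal_apply_eq]
      have hi' : ev i ≠ 0 := hi
      have hsq : ((Real.sqrt (ev i) : ℝ) : ℂ) * ((Real.sqrt (ev i) : ℝ) : ℂ) = (ev i : ℂ) := by
        rw [← Complex.ofReal_mul, Real.mul_self_sqrt (hev i)]
      have hne : ((Real.sqrt (ev i) : ℝ) : ℂ) ≠ 0 := by
        simp only [ne_eq, Complex.ofReal_eq_zero]
        exact Real.sqrt_ne_zero'.2 (lt_of_le_of_ne (hev i) (Ne.symm hi'))
      rw [← hsq]
      field_simp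
    · rw [if_neg (by simp only [ne_eq, Subtype.mk.injEq]; exact hij)]
      simp only [hDdef, Matrix.diagonal_apply_ne _ hij, mul_zero]
  obtain ⟨b, hb⟩ := horth.exists_orthonormalBasis_extension_of_card_eq
    (by simp)
  set U : Matrix (Fin d) (Fin d) ℂ := Matrix.of (fun i j => b j i)
    with hUdef
  have hUunit : Uᴴ * U = 1 := by
    ext i j
    have hbo := orthonormal_iff_ite.1 b.orthonormal i j
    rw [PiLp.inner_apply] at hbo
    simp only [RCLike.inner_apply] at hbo
    rw [Matrix.one_apply]
    rw [show (Uᴴ * U) i j = ∑ k, (starRingEnd ℂ) (b i k) * (b j k) from by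
      simp only [Matrix.mul_apply, Matrix.conjTranspose_apply, hUdef, Matrix.of_apply,
        starRingEnd_apply]]
    rw [← hbo]
    exact Finset.sum_congr rfl fun k _ => mul_comm _ _
  have hUunit' : U * Uᴴ = 1 := mul_eq_one_comm.1 hUunit
  set S : Matrix (Fin d) (Fin d) ℂ := Matrix.diagonal (fun i => ((Real.sqrt (ev i) : ℝ) : ℂ))
    with hSdef
  have hcol0 : ∀ j, ev j = 0 → ∀ i, N i j = 0 := by
    intro j hj i
    have h0 : (Nᴴ * N) j j = D j j := by rw [hNN]
    rw [hDdef] at h0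
    simp only [Matrix.mul_apply, Matrix.conjTranspose_apply, Matrix.diagonal_apply_eq,
      hj, Complex.ofReal_zero] at h0
    have h1 : ∑ k, (Complex.normSq (N k j) : ℂ) = 0 := by
      rw [← h0]
      congr 1
      ext k
      rw [← Complex.mul_conj, mul_comm]
      rfl
    have h2 : ∑ k, Complex.normSq (N k j) = 0 := by
      exact_mod_cast h1
    have h3 := (Finset.sum_eq_zero_iff_of_nonneg
      (fun k _ => Complex.normSq_nonneg (N k j))).1 h2 i (Finset.mem_univ i)
    exact Complex.normSq_eq_zero.1 h3
  have hNUS : N = U * S := by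
    ext i j
    rw [hSdef, Matrix.mul_diagonal]
    by_cases hj : ev j = 0
    · rw [hcol0 j hj i, hj]
      simp
    · have hbj := hb j hj
      rw [hUdef]
      simp only [Matrix.of_apply, hbj, hcdef, WithLp.equiv_symm_apply, PiLp.toLp_apply]
      have hne : ((Real.sqrt (ev j) : ℝ) : ℂ) ≠ 0 := by
        simp only [ne_eq, Complex.ofReal_eq_zero]
        exact Real.sqrt_ne_zero'.2 (lt_of_le_of_ne (hev j) (Ne.symm hj))
      field_simp
  -- the square root of Mᴴ M
  have hSpsd : (Vu * S * Vuᴴ).PosSemidef := by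
    apply Matrix.PosSemidef.mul_mul_conjTranspose_same
    rw [hSdef]
    refine Matrix.posSemidef_diagonal_iff.2 fun i => ?_
    rw [RCLike.nonneg_iff]
    constructor
    · exact_mod_cast Real.sqrt_nonneg (ev i)
    · exact_mod_cast rfl
  have hSsq : (Vu * S * Vuᴴ) ^ 2 = Mᴴ * M := by
    have hSS : S * S = D := by
      rw [hSdef, hDdef, Matrix.diagonal_mul_diagonal]
      refine congrArg Matrix.diagonal (funext fun i => ?_)
      rw [← Complex.ofReal_mul, Real.mul_self_sqrt (hev i)]
    rw [pow_two]
    calc Vu * S * Vuᴴ * (Vu * S * Vuᴴ) = Vu * S * (Vuᴴ * Vu) * S * Vuᴴ := by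
          simp only [Matrix.mul_assoc]
      _ = Vu * (S * S) * Vuᴴ := by rw [hVu1]; simp only [Matrix.mul_one, Matrix.mul_assoc]
      _ = Mᴴ * M := by rw [hSS, hspec]
  have hsqrt_eq : hKpsd.sqrt = Vu * S * Vuᴴ := rfl
  have htraceS : (Vu * S * Vuᴴ).trace = S.trace := by
    rw [Matrix.trace_mul_cycle, hVu1, Matrix.one_mul]
  have htraceSreal : S.trace = ((∑ i, Real.sqrt (ev i) : ℝ) : ℂ) := by
    rw [hSdef, Matrix.trace_diagonal, Complex.ofReal_sum]
  have htracenorm : traceNorm M = ∑ i, Real.sqrt (ev i) := by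
    unfold traceNorm
    rw [show (Matrix.posSemidef_conjTranspose_mul_self M).sqrt = hKpsd.sqrt from rfl,
      hsqrt_eq, htraceS, htraceSreal, Complex.ofReal_re]
  refine ⟨Vu * Uᴴ, ?_, ?_, ?_⟩
  · calc Vu * Uᴴ * (Vu * Uᴴ)ᴴ = Vu * (Uᴴ * U) * Vuᴴ := by
          rw [Matrix.conjTranspose_mul, Matrix.conjTranspose_conjTranspose]
          simp only [Matrix.mul_assoc]
      _ = 1 := by rw [hUunit, Matrix.mul_one, hVu2]
  · calc (Vu * Uᴴ)ᴴ * (Vu * Uᴴ) = U * (Vuᴴ * Vu) * Uᴴ := by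
          rw [Matrix.conjTranspose_mul, Matrix.conjTranspose_conjTranspose]
          simp only [Matrix.mul_assoc]
      _ = 1 := by rw [hVu1, Matrix.mul_one, hUunit']
  · calc (M * (Vu * Uᴴ)).trace = (N * Uᴴ).trace := by rw [hNdef, Matrix.mul_assoc]
      _ = (U * S * Uᴴ).trace := by rw [hNUS]
      _ = ((Uᴴ * U) * S).trace := by
          rw [Matrix.trace_mul_cycle, Matrix.mul_assoc]
      _ = S.trace := by rw [hUunit, Matrix.one_mul]
      _ = ((traceNorm M : ℝ) : ℂ) := by rw [htraceSreal, htracenorm]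

end MatrixSide

lemma traceNorm_nonneg' {d : ℕ} (M : Matrix (Fin d) (Fin d) ℂ) : 0 ≤ traceNorm M := by
  have h := (Matrix.posSemidef_conjTranspose_mul_self M).posSemidef_sqrt
  set S := (Matrix.posSemidef_conjTranspose_mul_self M).sqrt with hS
  have hdiag : ∀ i, 0 ≤ S i i := by
    intro i
    exact h.diag_nonneg
  unfold traceNorm
  rw [← hS, Matrix.trace, Complex.re_sum]
  refine Finset.sum_nonneg fun i _ => ?_
  have := hdiag i
  rw [Complex.le_def] at this
  simpa using this.1

section Helpers
variable {H : Type*} [NormedAddCommGroup H] [InnerProductSpace ℂ H]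

lemma norm_sq_eq_re_inner (x : H) : ‖x‖ ^ 2 = (⟪x, x⟫).re := by
  have h := inner_self_eq_norm_sq (𝕜 := ℂ) x
  rw [RCLike.re_eq_complex_re] at h
  exact h.symm

lemma norm_eq_one_of_inner (x : H) (h : ⟪x, x⟫ = 1) : ‖x‖ = 1 := by
  have h1 : ‖x‖ ^ 2 = 1 := by rw [_root_.norm_sq_eq_re_inner, h]; simp
  rw [← Real.sqrt_sq (norm_nonneg x), h1, Real.sqrt_one]

end Helpers


set_option maxHeartbeats 2000000 in
/-- Robust consecutive measurement theorem in fidelity. -/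
theorem robust_CMT_fidelity {d : ℕ} (P0 P1 σ0 σ1 : Matrix (Fin d) (Fin d) ℂ)
    (hP0 : P0.IsHermitian) (hP0p : P0 * P0 = P0)
    (hP1 : P1.IsHermitian) (hP1p : P1 * P1 = P1)
    (h0 : σ0.PosSemidef) (h0tr : σ0.trace = 1)
    (h1 : σ1.PosSemidef) (h1tr : σ1.trace = 1)
    (V E F : ℝ)
    (hV : V = (1 / 2) * (((P0 * σ0).trace).re + ((P1 * σ1).trace).re))
    (hE : E = (1 / 2) * (((P1 * P0 * σ0 * P0 * P1).trace).re
      + ((P0 * P1 * σ1 * P1 * P0).trace).re))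
    (hF : F = traceNorm (h0.sqrt * h1.sqrt)) :
    E ≥ V * (max 0 ((2 * V - 1) * F
      - 2 * Real.sqrt (V * (1 - V)) * Real.sqrt (1 - F ^ 2))) ^ 2 := by
  obtain ⟨W, hW1, hW2, hWtr⟩ := exists_unitary_traceNorm (h0.sqrt * h1.sqrt)
  set A : Matrix (Fin d) (Fin d) ℂ := h0.sqrt with hAdef
  set R : Matrix (Fin d) (Fin d) ℂ := h1.sqrt * W with hRdef
  have hAh : Aᴴ = A := h0.posSemidef_sqrt.1
  have hAA : A * A = σ0 := h0.sqrt_mul_self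
  have hRR : R * Rᴴ = σ1 := by
    rw [hRdef, Matrix.conjTranspose_mul, h1.posSemidef_sqrt.1]
    calc h1.sqrt * W * (Wᴴ * h1.sqrt) = h1.sqrt * (W * Wᴴ) * h1.sqrt := by
          simp only [Matrix.mul_assoc]
      _ = σ1 := by rw [hW1, Matrix.mul_one, h1.sqrt_mul_self]
  have keyA : ∀ X : Matrix (Fin d) (Fin d) ℂ, (Aᴴ * (X * A)).trace = (X * σ0).trace := by
    intro X
    rw [hAh, Matrix.trace_mul_comm, Matrix.mul_assoc, hAA]
  have keyR : ∀ X : Matrix (Fin d) (Fin d) ℂ, (Rᴴ * (X * R)).trace = (X * σ1).trace := by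
    intro X
    rw [Matrix.trace_mul_comm, Matrix.mul_assoc, hRR]
  set x0 := toV A with hx0def
  set x1 := toV R with hx1def
  set p0 := toV (P0 * A) with hp0def
  set p1 := toV (P1 * R) with hp1def
  set q0 := toV (P1 * (P0 * A)) with hq0def
  set q1 := toV (P0 * (P1 * R)) with hq1def
  -- inner product identities
  have hip0 : ⟪p0, p0⟫ = (P0 * σ0).trace := by
    rw [hp0def, inner_toV]
    rw [show (P0 * A)ᴴ * (P0 * A) = Aᴴ * ((P0 * P0) * A) from by
      simp only [Matrix.conjTranspose_mul, hAh, hP0.eq, Matrix.mul_assoc]]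
    rw [hP0p, keyA]
  have hip0x : ⟪p0, x0⟫ = (P0 * σ0).trace := by
    rw [hp0def, hx0def, inner_toV]
    rw [show (P0 * A)ᴴ * A = Aᴴ * (P0 * A) from by
      simp only [Matrix.conjTranspose_mul, hAh, hP0.eq, Matrix.mul_assoc]]
    rw [keyA]
  have hip1 : ⟪p1, p1⟫ = (P1 * σ1).trace := by
    rw [hp1def, inner_toV]
    rw [show (P1 * R)ᴴ * (P1 * R) = Rᴴ * ((P1 * P1) * R) from by
      simp only [Matrix.conjTranspose_mul, hP1.eq, Matrix.mul_assoc]]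
    rw [hP1p, keyR]
  have hip1x : ⟪p1, x1⟫ = (P1 * σ1).trace := by
    rw [hp1def, hx1def, inner_toV]
    rw [show (P1 * R)ᴴ * R = Rᴴ * (P1 * R) from by
      simp only [Matrix.conjTranspose_mul, hP1.eq, Matrix.mul_assoc]]
    rw [keyR]
  have hiq0 : ⟪q0, q0⟫ = (P1 * P0 * σ0 * P0 * P1).trace := by
    rw [hq0def, inner_toV]
    rw [show (P1 * (P0 * A))ᴴ * (P1 * (P0 * A)) = Aᴴ * ((P0 * (P1 * (P1 * P0))) * A) from by
      simp only [Matrix.conjTranspose_mul, hAh, hP0.eq, hP1.eq, Matrix.mul_assoc]]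
    rw [show P0 * (P1 * (P1 * P0)) = P0 * ((P1 * P1) * P0) from by
      simp only [Matrix.mul_assoc]]
    rw [hP1p, keyA]
    -- now: (P0 * (P1 * P0) * σ0).trace = (P1 * P0 * σ0 * P0 * P1).trace
    rw [show (P1 * P0 * σ0 * P0 * P1).trace = (P1 * (P1 * P0 * σ0 * P0)).trace from
      Matrix.trace_mul_comm _ _]
    rw [show P1 * (P1 * P0 * σ0 * P0) = ((P1 * P1) * P0) * σ0 * P0 from by
      simp only [Matrix.mul_assoc]]
    rw [hP1p]
    rw [show (P1 * P0 * σ0 * P0).trace = (P0 * (P1 * P0 * σ0)).trace from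
      Matrix.trace_mul_comm _ _]
    rw [show P0 * (P1 * P0 * σ0) = (P0 * (P1 * P0)) * σ0 from by
      simp only [Matrix.mul_assoc]]
  have hiq1 : ⟪q1, q1⟫ = (P0 * P1 * σ1 * P1 * P0).trace := by
    rw [hq1def, inner_toV]
    rw [show (P0 * (P1 * R))ᴴ * (P0 * (P1 * R)) = Rᴴ * ((P1 * (P0 * (P0 * P1))) * R) from by
      simp only [Matrix.conjTranspose_mul, hP0.eq, hP1.eq, Matrix.mul_assoc]]
    rw [show P1 * (P0 * (P0 * P1)) = P1 * ((P0 * P0) * P1) from by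
      simp only [Matrix.mul_assoc]]
    rw [hP0p, keyR]
    rw [show (P0 * P1 * σ1 * P1 * P0).trace = (P0 * (P0 * P1 * σ1 * P1)).trace from
      Matrix.trace_mul_comm _ _]
    rw [show P0 * (P0 * P1 * σ1 * P1) = ((P0 * P0) * P1) * σ1 * P1 from by
      simp only [Matrix.mul_assoc]]
    rw [hP0p]
    rw [show (P0 * P1 * σ1 * P1).trace = (P1 * (P0 * P1 * σ1)).trace from
      Matrix.trace_mul_comm _ _]
    rw [show P1 * (P0 * P1 * σ1) = (P1 * (P0 * P1)) * σ1 from by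
      simp only [Matrix.mul_assoc]]
  have hq0p1 : ⟪q0, p1⟫ = ⟪p0, p1⟫ := by
    rw [hq0def, hp0def, hp1def, inner_toV, inner_toV]
    congr 1
    rw [show (P1 * (P0 * A))ᴴ * (P1 * R) = (A * P0) * (P1 * (P1 * R)) from by
      simp only [Matrix.conjTranspose_mul, hAh, hP0.eq, hP1.eq, Matrix.mul_assoc]]
    rw [← Matrix.mul_assoc P1 P1 R, hP1p]
    simp only [Matrix.conjTranspose_mul, hAh, hP0.eq, Matrix.mul_assoc]
  have hq1p0 : ⟪q1, p0⟫ = ⟪p1, p0⟫ := by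
    rw [hq1def, hp1def, hp0def, inner_toV, inner_toV]
    congr 1
    rw [show (P0 * (P1 * R))ᴴ * (P0 * A) = (Rᴴ * P1) * (P0 * (P0 * A)) from by
      simp only [Matrix.conjTranspose_mul, hP0.eq, hP1.eq, Matrix.mul_assoc]]
    rw [← Matrix.mul_assoc P0 P0 A, hP0p]
    simp only [Matrix.conjTranspose_mul, hP1.eq, Matrix.mul_assoc]
  -- norms
  have hx0n : ‖x0‖ = 1 := by
    apply norm_eq_one_of_inner
    rw [hx0def, inner_toV, hAh, hAA, h0tr]
  have hx1n : ‖x1‖ = 1 := by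
    apply norm_eq_one_of_inner
    rw [hx1def, inner_toV, Matrix.trace_mul_comm, hRR, h1tr]
  -- the overlap
  have hover : ⟪x0, x1⟫ = ((F : ℝ) : ℂ) := by
    rw [hx0def, hx1def, inner_toV, hAh, hRdef, ← Matrix.mul_assoc, hWtr, hF]
  have hFnn : 0 ≤ F := by rw [hF]; exact traceNorm_nonneg' _
  have hFle : F ≤ (⟪x0, x1⟫).re := by rw [hover, Complex.ofReal_re]
  -- apply the pure lemma
  have hp0x : ⟪p0, x0⟫ = ⟪p0, p0⟫ := by rw [hip0x, hip0]
  have hp1x : ⟪p1, x1⟫ = ⟪p1, p1⟫ := by rw [hip1x, hip1]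
  have main := pure_CMT x0 x1 p0 p1 q0 q1 hx0n hx1n hp0x hp1x hq0p1 hq1p0 F hFnn hFle
  have hVeq : V = (‖p0‖ ^ 2 + ‖p1‖ ^ 2) / 2 := by
    rw [hV, _root_.norm_sq_eq_re_inner p0, _root_.norm_sq_eq_re_inner p1, hip0, hip1]
    ring
  have hEeq : E = (‖q0‖ ^ 2 + ‖q1‖ ^ 2) / 2 := by
    rw [hE, _root_.norm_sq_eq_re_inner q0, _root_.norm_sq_eq_re_inner q1, hiq0, hiq1]
    ring
  rw [hEeq, hVeq]
  exact main
end

section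
/- Let $P_0, P_1$ be rank-one orthogonal projections and $\sigma_0, \sigma_1$ density operators on a 2-dimensional Hilbert space. Define $V = \frac{1}{2}(\mathrm{Tr}(P_0\sigma_0)+\mathrm{Tr}(P_1\sigma_1))$, $E = \frac{1}{2}(\mathrm{Tr}(P_0P_1P_0\sigma_0)+\mathrm{Tr}(P_1P_0P_1\sigma_1))$, and $\Delta = \frac{1}{2}\|\sigma_0 - \sigma_1\|_1$. Then $E \geq V\left(\max\{0, (2V-1)\sqrt{1-\Delta^2} - \sqrt{1-(2V-1)^2}\,\Delta\}\right)^2$. -/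
set_option maxHeartbeats 2000000

open Matrix BigOperators ComplexOrder

/- Auxiliary lemmas -/

lemma two_cayley (A B : Matrix (Fin 2) (Fin 2) ℂ) :
    A * B * A = (A * B).trace • A + A.det • (B - B.trace • 1) := by
  ext i j
  fin_cases i <;> fin_cases j <;>
    simp [Matrix.mul_apply, Fin.sum_univ_two, Matrix.trace_fin_two, Matrix.det_fin_two,
      Matrix.one_apply, Matrix.smul_apply, Matrix.sub_apply] <;> ring

lemma proj_det_trace (P : Matrix (Fin 2) (Fin 2) ℂ) (hPp : P * P = P) (hPr : P.rank = 1) :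
    P.det = 0 ∧ P.trace = 1 := by
  have hdet : P.det = 0 := by
    by_contra h
    have h1 : IsUnit P.det := isUnit_iff_ne_zero.mpr h
    have h2 := Matrix.rank_of_isUnit P ((Matrix.isUnit_iff_isUnit_det _).mpr h1)
    simp [hPr] at h2
  refine ⟨hdet, ?_⟩
  have hne : P ≠ 0 := by
    intro h; rw [h] at hPr; simp [Matrix.rank_zero] at hPr
  have h1 := two_cayley P 1
  rw [mul_one, hPp, hdet, zero_smul, add_zero] at h1
  have h2 : (P.trace - 1) • P = 0 := by
    rw [sub_smul, one_smul, ← h1, sub_self]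
  rcases smul_eq_zero.mp h2 with h | h
  · exact sub_eq_zero.mp h
  · exact absurd h hne

lemma psd_smul_one (c : ℝ) (hc : 0 ≤ c) :
    ((c : ℂ) • (1 : Matrix (Fin 2) (Fin 2) ℂ)).PosSemidef := by
  constructor
  · unfold Matrix.IsHermitian
    rw [conjTranspose_smul]
    simp [Complex.conj_ofReal]
  · exact (Matrix.PosSemidef.one.smul (by exact_mod_cast hc : (0 : ℂ) ≤ (c : ℂ))).2

lemma sqrt_trace_smul_one (A : Matrix (Fin 2) (Fin 2) ℂ) (hA : A.PosSemidef) (μ : ℝ)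
    (h : A = (μ : ℂ) • 1) : hA.sqrt.trace.re = 2 * Real.sqrt μ := by
  have htr := hA.1.trace_eq_sum_eigenvalues
  have hdet := hA.1.det_eq_prod_eigenvalues
  rw [Fin.sum_univ_two] at htr
  rw [Fin.prod_univ_two] at hdet
  have htA : A.trace = 2 * (μ : ℂ) := by
    rw [h]; simp [Matrix.trace_fin_two]; ring
  have hdA : A.det = (μ : ℂ) ^ 2 := by
    rw [h]; simp [Matrix.det_fin_two]
  rw [htA] at htr
  rw [hdA] at hdet
  have e1 : hA.1.eigenvalues 0 + hA.1.eigenvalues 1 = 2 * μ := by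
    have := congrArg Complex.re htr; simp at this; linarith
  have e2 : hA.1.eigenvalues 0 * hA.1.eigenvalues 1 = μ ^ 2 := by
    have := congrArg Complex.re hdet
    simp [Complex.mul_re, sq] at this
    linarith
  have ev0 : hA.1.eigenvalues 0 = μ := by
    have e3 : hA.1.eigenvalues 1 = 2 * μ - hA.1.eigenvalues 0 := by linarith
    rw [e3] at e2
    have e4 : (hA.1.eigenvalues 0 - μ) ^ 2 = 0 := by nlinarith
    have := (pow_eq_zero_iff (n := 2) two_ne_zero).mp e4
    linarith
  have ev1 : hA.1.eigenvalues 1 = μ := by linarith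
  unfold Matrix.PosSemidef.sqrt
  rw [Matrix.trace_mul_comm, ← mul_assoc, Unitary.coe_star_mul_self, one_mul]
  simp [Matrix.trace_fin_two, ev0, ev1]
  ring

lemma traceNorm_of_hermitian_traceless (D : Matrix (Fin 2) (Fin 2) ℂ)
    (hD : D.IsHermitian) (htr : D.trace = 0) :
    traceNorm D = 2 * Real.sqrt ((D 0 0).re ^ 2 + (D 0 1).re ^ 2 + (D 0 1).im ^ 2) := by
  set μ : ℝ := (D 0 0).re ^ 2 + (D 0 1).re ^ 2 + (D 0 1).im ^ 2 with hμ
  have hμ0 : 0 ≤ μ := by positivity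
  have h10 : D 1 0 = (starRingEnd ℂ) (D 0 1) := by
    have := congr_fun (congr_fun hD.symm 1) 0
    simpa [Matrix.conjTranspose_apply] using this
  have h00im : (D 0 0).im = 0 := by
    have := congr_fun (congr_fun hD.symm 0) 0
    simp [Matrix.conjTranspose_apply] at this
    have h2 := congrArg Complex.im this
    simp at h2
    linarith
  have h11 : D 1 1 = -D 0 0 := by
    rw [Matrix.trace_fin_two] at htr; linear_combination htr
  have hDD : D * D = (μ : ℂ) • 1 := by
    have h := two_cayley D 1
    rw [mul_one] at h
    rw [h, htr]
    have hdet : D.det = -(μ : ℂ) := by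
      rw [Matrix.det_fin_two, h11, h10]
      have hre : D 0 0 = ((D 0 0).re : ℂ) := by
        rw [Complex.ext_iff]; simp [h00im]
      rw [hre, Complex.mul_conj, hμ]
      push_cast [Complex.normSq_apply]
      ring
    rw [hdet, zero_smul, zero_add]
    have htr1 : (1 : Matrix (Fin 2) (Fin 2) ℂ).trace = 2 := by
      simp [Matrix.trace_one]
    rw [htr1]
    have hone : (1 : Matrix (Fin 2) (Fin 2) ℂ) - (2 : ℂ) • 1 = -1 := by
      ext i j; fin_cases i <;> fin_cases j <;> simp [Matrix.one_apply] <;> norm_num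
    rw [hone, smul_neg, neg_smul, neg_neg]
  have hsq : ((Real.sqrt μ : ℂ) • (1 : Matrix (Fin 2) (Fin 2) ℂ)) ^ 2 = Dᴴ * D := by
    rw [hD.eq, hDD, smul_pow, one_pow, ← Complex.ofReal_pow, Real.sq_sqrt hμ0]
  have hDD' : Dᴴ * D = (μ : ℂ) • 1 := by rw [hD.eq, hDD]
  rw [traceNorm, sqrt_trace_smul_one _ _ μ hDD']

lemma herm_facts (A : Matrix (Fin 2) (Fin 2) ℂ) (hA : A.IsHermitian) :
    (A 1 0).re = (A 0 1).re ∧ (A 1 0).im = -(A 0 1).im ∧ (A 0 0).im = 0 ∧ (A 1 1).im = 0 := by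
  have h10 := congr_fun (congr_fun hA.symm 1) 0
  have h00 := congr_fun (congr_fun hA.symm 0) 0
  have h11 := congr_fun (congr_fun hA.symm 1) 1
  simp [Matrix.conjTranspose_apply, Complex.ext_iff] at h10 h00 h11
  refine ⟨by linarith [h10.1], by linarith [h10.2], by linarith [h00], by linarith [h11]⟩

lemma trace_mul_herm (A B : Matrix (Fin 2) (Fin 2) ℂ) (hA : A.IsHermitian) (hB : B.IsHermitian) :
    ((A*B).trace).re = (A 0 0).re*(B 0 0).re + (A 1 1).re*(B 1 1).re
        + 2*((A 0 1).re*(B 0 1).re + (A 0 1).im*(B 0 1).im)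
      ∧ ((A*B).trace).im = 0 := by
  obtain ⟨a1, a2, a3, a4⟩ := herm_facts A hA
  obtain ⟨b1, b2, b3, b4⟩ := herm_facts B hB
  constructor <;>
  · simp [Matrix.trace_fin_two, Matrix.mul_apply, Fin.sum_univ_two, Complex.add_re,
      Complex.add_im, Complex.mul_re, Complex.mul_im, a1, a2, a3, a4, b1, b2, b3, b4]
    ring

lemma psd_det (A : Matrix (Fin 2) (Fin 2) ℂ) (hA : A.PosSemidef) :
    (A 0 1).re^2 + (A 0 1).im^2 ≤ (A 0 0).re * (A 1 1).re := by
  obtain ⟨a1, a2, a3, a4⟩ := herm_facts A hA.1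
  have hd := hA.1.det_eq_prod_eigenvalues
  rw [Fin.prod_univ_two] at hd
  have hre : (A.det).re = hA.1.eigenvalues 0 * hA.1.eigenvalues 1 := by
    rw [hd]; simp [Complex.mul_re]
  have hnn : 0 ≤ (A.det).re := by
    rw [hre]
    exact mul_nonneg (hA.eigenvalues_nonneg 0) (hA.eigenvalues_nonneg 1)
  rw [Matrix.det_fin_two] at hnn
  simp [Complex.sub_re, Complex.mul_re, a1, a2, a3, a4] at hnn
  nlinarith [hnn]

lemma bs_aux (a x y : ℝ) (h : x^2 + y^2 ≤ a * (1 - a)) :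
    (2*x)^2 + (-2*y)^2 + (2*a - 1)^2 ≤ 1 := by nlinarith

lemma cs3 (a1 a2 a3 b1 b2 b3 : ℝ) :
    (a1*b1+a2*b2+a3*b3)^2 ≤ (a1^2+a2^2+a3^2)*(b1^2+b2^2+b3^2) := by
  nlinarith [sq_nonneg (a1*b2-a2*b1), sq_nonneg (a1*b3-a3*b1), sq_nonneg (a2*b3-a3*b2)]

lemma bloch_main (r01 r02 r03 r11 r12 r13 s01 s02 s03 s11 s12 s13 F v Δ V : ℝ)
    (hr0 : r01^2+r02^2+r03^2 = 1) (hr1 : r11^2+r12^2+r13^2 = 1)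
    (hs0 : s01^2+s02^2+s03^2 ≤ 1) (hs1 : s11^2+s12^2+s13^2 ≤ 1)
    (hF : F = (1 + (r01*r11+r02*r12+r03*r13))/2)
    (hv : v = ((r01*s01+r02*s02+r03*s03)+(r11*s11+r12*s12+r13*s13))/2)
    (hΔ2 : Δ^2 = ((s01-s11)^2+(s02-s12)^2+(s03-s13)^2)/4) (hΔ0 : 0 ≤ Δ)
    (hV : V = (1+v)/2) :
    0 ≤ F ∧ F ≤ 1 ∧ 0 ≤ V ∧ Δ ≤ 1 ∧
      v ≤ Real.sqrt F * Real.sqrt (1 - Δ^2) + Real.sqrt (1-F) * Δ := by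
  have er : (r01+r11)^2+(r02+r12)^2+(r03+r13)^2
      = (r01^2+r02^2+r03^2) + (r11^2+r12^2+r13^2) + 2*(r01*r11+r02*r12+r03*r13) := by ring
  have er' : (r01-r11)^2+(r02-r12)^2+(r03-r13)^2
      = (r01^2+r02^2+r03^2) + (r11^2+r12^2+r13^2) - 2*(r01*r11+r02*r12+r03*r13) := by ring
  have hF0 : 0 ≤ F := by
    have h := add_nonneg (add_nonneg (sq_nonneg (r01+r11)) (sq_nonneg (r02+r12))) (sq_nonneg (r03+r13))
    linarith [er]
  have hF1 : F ≤ 1 := by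
    have h := add_nonneg (add_nonneg (sq_nonneg (r01-r11)) (sq_nonneg (r02-r12))) (sq_nonneg (r03-r13))
    linarith [er']
  have hV0 : 0 ≤ V := by
    have h0 := add_nonneg (add_nonneg (sq_nonneg (r01+s01)) (sq_nonneg (r02+s02))) (sq_nonneg (r03+s03))
    have h1 := add_nonneg (add_nonneg (sq_nonneg (r11+s11)) (sq_nonneg (r12+s12))) (sq_nonneg (r13+s13))
    have e0 : (r01+s01)^2+(r02+s02)^2+(r03+s03)^2
      = (r01^2+r02^2+r03^2) + (s01^2+s02^2+s03^2) + 2*(r01*s01+r02*s02+r03*s03) := by ring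
    have e1 : (r11+s11)^2+(r12+s12)^2+(r13+s13)^2
      = (r11^2+r12^2+r13^2) + (s11^2+s12^2+s13^2) + 2*(r11*s11+r12*s12+r13*s13) := by ring
    linarith
  have es : ((s01+s11)^2+(s02+s12)^2+(s03+s13)^2) + ((s01-s11)^2+(s02-s12)^2+(s03-s13)^2)
      = 2*(s01^2+s02^2+s03^2) + 2*(s11^2+s12^2+s13^2) := by ring
  have hBs : ((s01+s11)^2+(s02+s12)^2+(s03+s13)^2) ≤ 4*(1-Δ^2) := by linarith
  have hΔ1sq : 0 ≤ 1 - Δ^2 := by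
    have := add_nonneg (add_nonneg (sq_nonneg (s01+s11)) (sq_nonneg (s02+s12))) (sq_nonneg (s03+s13))
    linarith
  have hΔ1 : Δ ≤ 1 := by nlinarith [sq_nonneg (Δ - 1)]
  refine ⟨hF0, hF1, hV0, hΔ1, ?_⟩
  set P : ℝ := ((r01+r11)*(s01+s11)+(r02+r12)*(s02+s12)+(r03+r13)*(s03+s13))/4 with hP
  set Q : ℝ := ((r11-r01)*(s11-s01)+(r12-r02)*(s12-s02)+(r13-r03)*(s13-s03))/4 with hQ
  have hvPQ : v = P + Q := by rw [hP, hQ, hv]; ring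
  have hP2 : P^2 ≤ F * (1 - Δ^2) := by
    have h1 := cs3 (r01+r11) (r02+r12) (r03+r13) (s01+s11) (s02+s12) (s03+s13)
    have hA : (r01+r11)^2+(r02+r12)^2+(r03+r13)^2 = 4*F := by linarith [er]
    rw [hA] at h1
    have h2 : (4*F)*((s01+s11)^2+(s02+s12)^2+(s03+s13)^2) ≤ (4*F)*(4*(1-Δ^2)) :=
      mul_le_mul_of_nonneg_left hBs (by linarith)
    have e3 : (4*F)*(4*(1-Δ^2)) = 16*(F*(1-Δ^2)) := by ring
    have e4 : P^2 = ((r01+r11)*(s01+s11)+(r02+r12)*(s02+s12)+(r03+r13)*(s03+s13))^2/16 := by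
      rw [hP]; ring
    linarith
  have hQ2 : Q^2 ≤ (1-F) * Δ^2 := by
    have h1 := cs3 (r11-r01) (r12-r02) (r13-r03) (s11-s01) (s12-s02) (s13-s03)
    have hA : (r11-r01)^2+(r12-r02)^2+(r13-r03)^2 = 4*(1-F) := by linarith [er']
    rw [hA] at h1
    have hBq : (s11-s01)^2+(s12-s02)^2+(s13-s03)^2 = 4*Δ^2 := by linarith [hΔ2]
    rw [hBq] at h1
    have e3 : (4*(1-F))*(4*Δ^2) = 16*((1-F)*Δ^2) := by ring
    have e4 : Q^2 = ((r11-r01)*(s11-s01)+(r12-r02)*(s12-s02)+(r13-r03)*(s13-s03))^2/16 := by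
      rw [hQ]; ring
    linarith
  have hPle : P ≤ Real.sqrt F * Real.sqrt (1 - Δ^2) := by
    calc P ≤ |P| := le_abs_self P
    _ = Real.sqrt (P^2) := (Real.sqrt_sq_eq_abs P).symm
    _ ≤ Real.sqrt (F * (1 - Δ^2)) := Real.sqrt_le_sqrt hP2
    _ = Real.sqrt F * Real.sqrt (1 - Δ^2) := Real.sqrt_mul hF0 _
  have hQle : Q ≤ Real.sqrt (1-F) * Δ := by
    calc Q ≤ |Q| := le_abs_self Q
    _ = Real.sqrt (Q^2) := (Real.sqrt_sq_eq_abs Q).symm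
    _ ≤ Real.sqrt ((1-F) * Δ^2) := Real.sqrt_le_sqrt hQ2
    _ = Real.sqrt (1-F) * Real.sqrt (Δ^2) := Real.sqrt_mul (by linarith) _
    _ = Real.sqrt (1-F) * Δ := by rw [Real.sqrt_sq hΔ0]
  linarith [hvPQ]

lemma endgame (F v Δ V : ℝ) (hF0 : 0 ≤ F) (hF1 : F ≤ 1) (hΔ0 : 0 ≤ Δ) (hΔ1 : Δ ≤ 1)
    (hV0 : 0 ≤ V)
    (hv : v ≤ Real.sqrt F * Real.sqrt (1 - Δ ^ 2) + Real.sqrt (1 - F) * Δ) :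
    F * V ≥ V * (max 0 (v * Real.sqrt (1 - Δ ^ 2) - Real.sqrt (1 - v ^ 2) * Δ)) ^ 2 := by
  set f := Real.sqrt F with hf
  set g := Real.sqrt (1 - F) with hg
  set c := Real.sqrt (1 - Δ ^ 2) with hc
  set w := Real.sqrt (1 - v ^ 2) with hw
  have hf0 : 0 ≤ f := Real.sqrt_nonneg _
  have hg0 : 0 ≤ g := Real.sqrt_nonneg _
  have hc0 : 0 ≤ c := Real.sqrt_nonneg _
  have hw0 : 0 ≤ w := Real.sqrt_nonneg _
  have hf2 : f ^ 2 = F := Real.sq_sqrt hF0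
  have hg2 : g ^ 2 = 1 - F := Real.sq_sqrt (by linarith)
  have hc2 : c ^ 2 = 1 - Δ ^ 2 := Real.sq_sqrt (by nlinarith)
  rcases le_or_gt (v * c - w * Δ) 0 with hR | hR
  · rw [max_eq_left hR]
    simpa using mul_nonneg hF0 hV0
  · rw [max_eq_right hR.le]
    have hwΔ : 0 ≤ w * Δ := mul_nonneg hw0 hΔ0
    have hvc : 0 < v * c := by linarith
    have hcpos : 0 < c := by
      rcases hc0.lt_or_eq with h | h
      · exact h
      · exfalso; rw [← h] at hvc; simp at hvc
    have hvpos : 0 < v := by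
      rcases mul_pos_iff.mp hvc with ⟨h, _⟩ | ⟨_, h⟩
      · exact h
      · linarith
    have hv1 : v ≤ f * c + g * Δ := hv
    have hw2 : w ^ 2 = 1 - v ^ 2 := by
      rw [hw]
      apply Real.sq_sqrt
      nlinarith [sq_nonneg (f * Δ - g * c), sq_nonneg (f * c + g * Δ)]
    have hkey : g * c - f * Δ ≤ w := by
      rcases le_or_gt (g * c - f * Δ) 0 with h | h
      · linarith
      · have h2 : (g * c - f * Δ) ^ 2 ≤ w ^ 2 := by nlinarith
        nlinarith
    have hP1 : v * c ≤ (f * c + g * Δ) * c := mul_le_mul_of_nonneg_right hv1 hc0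
    have hP2 : 0 ≤ Δ * (f * Δ + w - g * c) := mul_nonneg hΔ0 (by linarith)
    have hfR : v * c - w * Δ ≤ f := by nlinarith [hc2, hP1, hP2]
    have hF' : (v * c - w * Δ) ^ 2 ≤ F := by
      have := pow_le_pow_left₀ hR.le hfR 2
      rwa [hf2] at this
    have hfin := mul_le_mul_of_nonneg_left hF' hV0
    have hcomm : F * V = V * F := mul_comm F V
    linarith

/-- Qubit robust consecutive measurement theorem with rank-one projections. -/
theorem qubit_robust_CMT (P0 P1 σ0 σ1 : Matrix (Fin 2) (Fin 2) ℂ)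
    (hP0 : P0.IsHermitian) (hP0p : P0 * P0 = P0) (hP0r : P0.rank = 1)
    (hP1 : P1.IsHermitian) (hP1p : P1 * P1 = P1) (hP1r : P1.rank = 1)
    (h0 : σ0.PosSemidef) (h0tr : σ0.trace = 1)
    (h1 : σ1.PosSemidef) (h1tr : σ1.trace = 1)
    (V E Δ : ℝ)
    (hV : V = (1 / 2) * (((P0 * σ0).trace).re + ((P1 * σ1).trace).re))
    (hE : E = (1 / 2) * (((P0 * P1 * P0 * σ0).trace).re + ((P1 * P0 * P1 * σ1).trace).re))
    (hΔ : Δ = (1 / 2) * traceNorm (σ0 - σ1)) :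
    E ≥ V * (max 0 ((2 * V - 1) * Real.sqrt (1 - Δ ^ 2)
        - Real.sqrt (1 - (2 * V - 1) ^ 2) * Δ)) ^ 2 := by
  obtain ⟨hd0, ht0⟩ := proj_det_trace P0 hP0p hP0r
  obtain ⟨hd1, ht1⟩ := proj_det_trace P1 hP1p hP1r
  obtain ⟨p0a, p0b, p0c, p0d⟩ := herm_facts P0 hP0
  obtain ⟨p1a, p1b, p1c, p1d⟩ := herm_facts P1 hP1
  obtain ⟨q0a, q0b, q0c, q0d⟩ := herm_facts σ0 h0.1
  obtain ⟨q1a, q1b, q1c, q1d⟩ := herm_facts σ1 h1.1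
  -- real trace relations
  have ht0' : (P0 1 1).re = 1 - (P0 0 0).re := by
    have := congrArg Complex.re ht0
    simp [Matrix.trace_fin_two] at this
    linarith
  have ht1' : (P1 1 1).re = 1 - (P1 0 0).re := by
    have := congrArg Complex.re ht1
    simp [Matrix.trace_fin_two] at this
    linarith
  have hq0' : (σ0 1 1).re = 1 - (σ0 0 0).re := by
    have := congrArg Complex.re h0tr
    simp [Matrix.trace_fin_two] at this
    linarith
  have hq1' : (σ1 1 1).re = 1 - (σ1 0 0).re := by
    have := congrArg Complex.re h1tr
    simp [Matrix.trace_fin_two] at this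
    linarith
  -- det relations for projections
  have hd0' : (P0 0 0).re * (1 - (P0 0 0).re) - ((P0 0 1).re^2+(P0 0 1).im^2) = 0 := by
    have := congrArg Complex.re hd0
    rw [Matrix.det_fin_two] at this
    simp [Complex.sub_re, Complex.mul_re, p0a, p0b, p0c, p0d, ht0'] at this
    nlinarith [this]
  have hd1' : (P1 0 0).re * (1 - (P1 0 0).re) - ((P1 0 1).re^2+(P1 0 1).im^2) = 0 := by
    have := congrArg Complex.re hd1
    rw [Matrix.det_fin_two] at this
    simp [Complex.sub_re, Complex.mul_re, p1a, p1b, p1c, p1d, ht1'] at this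
    nlinarith [this]
  -- psd dets
  have hs0det := psd_det σ0 h0
  have hs1det := psd_det σ1 h1
  rw [hq0'] at hs0det
  rw [hq1'] at hs1det
  -- trace values
  obtain ⟨hT0re, hT0im⟩ := trace_mul_herm P0 σ0 hP0 h0.1
  obtain ⟨hT1re, hT1im⟩ := trace_mul_herm P1 σ1 hP1 h1.1
  obtain ⟨hFre, hFim⟩ := trace_mul_herm P0 P1 hP0 hP1
  rw [ht0', hq0'] at hT0re
  rw [ht1', hq1'] at hT1re
  rw [ht0', ht1'] at hFre
  -- E simplification
  have hcay0 : P0 * P1 * P0 = (P0 * P1).trace • P0 := by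
    rw [two_cayley P0 P1, hd0, zero_smul, add_zero]
  have hcay1 : P1 * P0 * P1 = (P1 * P0).trace • P1 := by
    rw [two_cayley P1 P0, hd1, zero_smul, add_zero]
  have hE0 : ((P0*P1*P0*σ0).trace) = (P0*P1).trace * (P0*σ0).trace := by
    rw [hcay0, smul_mul_assoc, trace_smul, smul_eq_mul]
  have hE1 : ((P1*P0*P1*σ1).trace) = (P0*P1).trace * (P1*σ1).trace := by
    rw [hcay1, smul_mul_assoc, trace_smul, smul_eq_mul, Matrix.trace_mul_comm]
  have hEre0 : ((P0*P1*P0*σ0).trace).re = ((P0*P1).trace).re * ((P0*σ0).trace).re := by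
    rw [hE0, Complex.mul_re, hFim, hT0im]; ring
  have hEre1 : ((P1*P0*P1*σ1).trace).re = ((P0*P1).trace).re * ((P1*σ1).trace).re := by
    rw [hE1, Complex.mul_re, hFim, hT1im]; ring
  -- trace norm
  have hDtr : (σ0 - σ1).trace = 0 := by rw [Matrix.trace_sub, h0tr, h1tr, sub_self]
  have hDnorm := traceNorm_of_hermitian_traceless (σ0 - σ1) (h0.1.sub h1.1) hDtr
  simp only [Matrix.sub_apply, Complex.sub_re, Complex.sub_im] at hDnorm
  set μ : ℝ := ((σ0 0 0).re - (σ1 0 0).re) ^ 2 + ((σ0 0 1).re - (σ1 0 1).re) ^ 2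
      + ((σ0 0 1).im - (σ1 0 1).im) ^ 2 with hμdef
  have hμ0 : 0 ≤ μ := by positivity
  have hΔval : Δ = Real.sqrt μ := by rw [hΔ, hDnorm]; ring
  have hΔ0 : 0 ≤ Δ := by rw [hΔval]; exact Real.sqrt_nonneg _
  have hΔsq : Δ ^ 2 = μ := by rw [hΔval]; exact Real.sq_sqrt hμ0
  -- apply bloch_main
  have br0 : (2*(P0 0 1).re)^2 + (-2*(P0 0 1).im)^2 + (2*(P0 0 0).re - 1)^2 = 1 := by
    linear_combination (-4 : ℝ) * hd0'
  have br1 : (2*(P1 0 1).re)^2 + (-2*(P1 0 1).im)^2 + (2*(P1 0 0).re - 1)^2 = 1 := by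
    linear_combination (-4 : ℝ) * hd1'
  have bs0 : (2*(σ0 0 1).re)^2 + (-2*(σ0 0 1).im)^2 + (2*(σ0 0 0).re - 1)^2 ≤ 1 :=
    bs_aux _ _ _ (by linarith [hs0det])
  have bs1 : (2*(σ1 0 1).re)^2 + (-2*(σ1 0 1).im)^2 + (2*(σ1 0 0).re - 1)^2 ≤ 1 :=
    bs_aux _ _ _ (by linarith [hs1det])
  have bF : ((P0*P1).trace).re = (1 + ((2*(P0 0 1).re)*(2*(P1 0 1).re)
      + (-2*(P0 0 1).im)*(-2*(P1 0 1).im) + (2*(P0 0 0).re - 1)*(2*(P1 0 0).re - 1)))/2 := by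
    rw [hFre]; ring
  have bv : 2*V - 1 = (((2*(P0 0 1).re)*(2*(σ0 0 1).re) + (-2*(P0 0 1).im)*(-2*(σ0 0 1).im)
        + (2*(P0 0 0).re - 1)*(2*(σ0 0 0).re - 1))
      + ((2*(P1 0 1).re)*(2*(σ1 0 1).re) + (-2*(P1 0 1).im)*(-2*(σ1 0 1).im)
        + (2*(P1 0 0).re - 1)*(2*(σ1 0 0).re - 1)))/2 := by
    rw [hV, hT0re, hT1re]; ring
  have bΔ : Δ^2 = (((2*(σ0 0 1).re) - (2*(σ1 0 1).re))^2 + ((-2*(σ0 0 1).im) - (-2*(σ1 0 1).im))^2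
      + ((2*(σ0 0 0).re - 1) - (2*(σ1 0 0).re - 1))^2)/4 := by
    rw [hΔsq, hμdef]; ring
  have bV : V = (1 + (2*V - 1))/2 := by ring
  obtain ⟨hF0, hF1, hV0, hΔ1, hvb⟩ := bloch_main
    (2*(P0 0 1).re) (-2*(P0 0 1).im) (2*(P0 0 0).re - 1)
    (2*(P1 0 1).re) (-2*(P1 0 1).im) (2*(P1 0 0).re - 1)
    (2*(σ0 0 1).re) (-2*(σ0 0 1).im) (2*(σ0 0 0).re - 1)
    (2*(σ1 0 1).re) (-2*(σ1 0 1).im) (2*(σ1 0 0).re - 1)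
    (((P0*P1).trace).re) (2*V - 1) Δ V
    br0 br1 bs0 bs1 bF bv bΔ hΔ0 bV
  have hE' : E = ((P0*P1).trace).re * V := by
    rw [hE, hEre0, hEre1, hV]; ring
  rw [hE']
  exact endgame (((P0*P1).trace).re) (2*V - 1) Δ V hF0 hF1 hΔ0 hΔ1 hV0 hvb
end

section
/- For all $\Delta, V \in [0,1]$, the inequality $V\left(\max\{0, (2V-1)\sqrt{1-\Delta^2} - \sqrt{1-(2V-1)^2}\,\Delta\}\right)^2 \geq V(\max\{0, 2V-1\})^2 - \Delta$ holds. -/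
/-- The angle-based lower bound dominates the additively-perturbed bound. -/
theorem angle_bound_dominates (Δ V : ℝ)
    (hΔ : Δ ∈ Set.Icc (0 : ℝ) 1) (hV : V ∈ Set.Icc (0 : ℝ) 1) :
    V * (max 0 ((2 * V - 1) * Real.sqrt (1 - Δ ^ 2)
        - Real.sqrt (1 - (2 * V - 1) ^ 2) * Δ)) ^ 2
      ≥ V * (max 0 (2 * V - 1)) ^ 2 - Δ := by
  obtain ⟨hΔ0, hΔ1⟩ := hΔ
  obtain ⟨hV0, hV1⟩ := hV
  set c := 2 * V - 1 with hc
  have hlhs0 : 0 ≤ V * (max 0 (c * Real.sqrt (1 - Δ ^ 2)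
      - Real.sqrt (1 - c ^ 2) * Δ)) ^ 2 := by positivity
  rcases le_or_gt c 0 with hcneg | hcpos
  · rw [max_eq_left hcneg]
    nlinarith
  · have hc1 : c ≤ 1 := by simp [hc]; linarith
    have hcn : 0 ≤ c := hcpos.le
    rw [max_eq_right hcn]
    set a := Real.sqrt (1 - Δ ^ 2) with ha
    set s := Real.sqrt (1 - c ^ 2) with hs
    have ha2 : a ^ 2 = 1 - Δ ^ 2 := Real.sq_sqrt (by nlinarith)
    have hs2 : s ^ 2 = 1 - c ^ 2 := Real.sq_sqrt (by nlinarith)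
    have ha0 : 0 ≤ a := Real.sqrt_nonneg _
    have hs0 : 0 ≤ s := Real.sqrt_nonneg _
    rcases le_or_gt (c * a - s * Δ) 0 with hE | hE
    · rw [max_eq_left hE]
      have h1 : 0 ≤ (s * Δ - c * a) * (s * Δ + c * a) := by
        apply mul_nonneg (by linarith)
        have := mul_nonneg hs0 hΔ0
        have := mul_nonneg hcn ha0
        linarith
      have h2 : c ^ 2 ≤ Δ ^ 2 := by nlinarith
      have h3 : c ≤ Δ := by nlinarith
      nlinarith
    · rw [max_eq_right hE.le]
      set X := 2 * s * c * a + (2 * c ^ 2 - 1) * Δ with hX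
      clear_value X
      have hid : X ^ 2 + ((2 * c ^ 2 - 1) * a - 2 * s * c * Δ) ^ 2 = 1 := by
        rw [hX]
        linear_combination (4 * c ^ 2 * (a ^ 2 + Δ ^ 2)) * hs2
          + (4 * (1 - c ^ 2) * c ^ 2 + (2 * c ^ 2 - 1) ^ 2) * ha2
      have hY : 0 ≤ ((2 * c ^ 2 - 1) * a - 2 * s * c * Δ) ^ 2 := sq_nonneg _
      have hXX : 0 ≤ (X - 1) ^ 2 := sq_nonneg _
      have hsin : X ≤ 1 := by nlinarith [hY, hXX]
      have hkey : V * c ^ 2 - V * (c * a - s * Δ) ^ 2 = V * Δ * X := by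
        rw [hX]
        linear_combination (-(V * c ^ 2)) * ha2 + (-(V * Δ ^ 2)) * hs2
      have hfin : V * Δ * X ≤ Δ := by
        rcases le_or_gt X 0 with h | h
        · have h1 : V * Δ * X ≤ 0 :=
            mul_nonpos_of_nonneg_of_nonpos (mul_nonneg hV0 hΔ0) h
          linarith
        · have h1 : V * (Δ * X) ≤ 1 * (Δ * X) :=
            mul_le_mul_of_nonneg_right hV1 (mul_nonneg hΔ0 h.le)
          have h2 : Δ * X ≤ Δ * 1 := mul_le_mul_of_nonneg_left hsin hΔ0
          nlinarith
      linarith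
end
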